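/- arXiv:1207.0164 — 4 statements merged into one kernel-verified Lean document; each statement's English description precedes it below -/
import Mathlib

section
/- Let P ⊂ ℝ^n be a rational polytope with 0 ∈ P and let d := den(P^∨). Then llenv(cone P) is the union, over integers 0 ≤ i ≤ d − 1, of the sets { x − (i/d)e_{n+1} : x ∈ (lenv(cone P) + (i/d)e_{n+1}) ∩ ℤ^{n+1} }, and this union is disjoint. -/
open Set Pointwise
open scoped Classical

noncomputable section

namespace ArxivFreeSum

/-- A point of `ℝ^m` is an integer lattice point iff all coordinates are integers. -/
def IsLat {m : ℕ} (x : Fin m → ℝ) : Prop := ∀ i, ∃ z : ℤ, x i = (z : ℝ)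

/-- The set of integer lattice points of a set `S`. -/
def latt {m : ℕ} (S : Set (Fin m → ℝ)) : Set (Fin m → ℝ) := {x | x ∈ S ∧ IsLat x}

variable {n : ℕ}

/-- The affine embedding `α : ℝ^n → ℝ^{n+1}`, `a ↦ (a, 1)`. -/
def emb (a : Fin n → ℝ) : Fin (n + 1) → ℝ := Fin.snoc a 1

/-- The cone over `K`: all nonnegative multiples of `α(K)`. -/
def cone (K : Set (Fin n → ℝ)) : Set (Fin (n + 1) → ℝ) :=
  {x | ∃ l : ℝ, ∃ a ∈ K, 0 ≤ l ∧ x = l • emb a}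

/-- The last standard basis vector `e_{n+1}` of `ℝ^{n+1}`. -/
def eLast (n : ℕ) : Fin (n + 1) → ℝ := Pi.single (Fin.last n) 1

/-- The vertical projection `ε_J` onto the lower envelope of `cone J`. -/
def eps (J : Set (Fin n → ℝ)) (x : Fin (n + 1) → ℝ) : Fin (n + 1) → ℝ :=
  x - sSup {l : ℝ | x - l • eLast n ∈ cone J} • eLast n

/-- The lower envelope of `cone J`. -/
def lenv (J : Set (Fin n → ℝ)) : Set (Fin (n + 1) → ℝ) := eps J '' cone J

/-- The lower lattice envelope of `cone J`. -/
def llenv (J : Set (Fin n → ℝ)) : Set (Fin (n + 1) → ℝ) := eps J '' latt (cone J)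

/-- `J ⊕ K` is a free sum. -/
def IsFreeSum (J K : Set (Fin n → ℝ)) : Prop :=
  (0 : Fin n → ℝ) ∈ J ∧ (0 : Fin n → ℝ) ∈ K ∧
    ∀ m : Fin n → ℝ, m ∈ Submodule.span ℝ (J ∪ K) → IsLat m →
      ∃! q : (Fin n → ℝ) × (Fin n → ℝ),
        (q.1 ∈ Submodule.span ℝ J ∧ IsLat q.1) ∧
        (q.2 ∈ Submodule.span ℝ K ∧ IsLat q.2) ∧ m = q.1 + q.2

/-- `N_{J,K}(m)`: the number of pairs of lattice points of `cone J` and `cone K` summing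
to `m`. -/
def Npairs (J K : Set (Fin n → ℝ)) (m : Fin (n + 1) → ℤ) : ℕ :=
  Set.ncard {q : (Fin (n + 1) → ℝ) × (Fin (n + 1) → ℝ) |
    q.1 ∈ latt (cone J) ∧ q.2 ∈ latt (cone K) ∧ q.1 + q.2 = fun i => (m i : ℝ)}

/-- The coefficientwise form of the multivariate Braun equation
`σ_{cone(J⊕K)} = (1 - z_{n+1}) σ_{cone J} σ_{cone K}`. -/
def BraunEq (J K : Set (Fin n → ℝ)) : Prop :=
  ∀ m : Fin (n + 1) → ℤ,
    (Npairs J K m : ℤ) - (Npairs J K (m - Pi.single (Fin.last n) 1) : ℤ) =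
      if (fun i => (m i : ℝ)) ∈ cone (convexHull ℝ (J ∪ K)) then 1 else 0

/-- A rational polytope: convex hull of finitely many rational points. -/
def IsRatPolytope (P : Set (Fin n → ℝ)) : Prop :=
  ∃ V : Finset (Fin n → ℝ), (∀ v ∈ V, ∀ i, ∃ q : ℚ, v i = (q : ℝ)) ∧
    P = convexHull ℝ (V : Set (Fin n → ℝ))

/-- A lattice polytope: convex hull of finitely many lattice points. -/
def IsLatPolytope (P : Set (Fin n → ℝ)) : Prop :=
  ∃ V : Finset (Fin n → ℝ), (∀ v ∈ V, IsLat v) ∧ P = convexHull ℝ (V : Set (Fin n → ℝ))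

/-- The polar dual `P^∨ ⊆ (lin P)^*` of a polytope `P` containing the origin. -/
def dualSet (P : Set (Fin n → ℝ)) : Set (Module.Dual ℝ (Submodule.span ℝ P)) :=
  {φ | ∀ a : Submodule.span ℝ P, (a : Fin n → ℝ) ∈ P → φ a ≤ 1}

/-- Membership in the dual integer lattice `(lin P)^*_ℤ`. -/
def IsDualLatticePt (P : Set (Fin n → ℝ)) (φ : Module.Dual ℝ (Submodule.span ℝ P)) : Prop :=
  ∀ a : Submodule.span ℝ P, IsLat (a : Fin n → ℝ) → ∃ z : ℤ, φ a = (z : ℝ)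

/-- `P^∨` is a lattice polyhedron: every vertex (= extreme point) of `P^∨` lies in the
dual integer lattice. -/
def DualIsLatticePolyhedron (P : Set (Fin n → ℝ)) : Prop :=
  ∀ φ ∈ Set.extremePoints ℝ (dualSet P), IsDualLatticePt P φ

/-- `den(P^∨)`: the smallest positive integer `d` such that `d • P^∨` is a lattice
polyhedron. -/
def dualDen (P : Set (Fin n → ℝ)) : ℕ :=
  sInf {d : ℕ | 0 < d ∧ ∀ φ ∈ Set.extremePoints ℝ (dualSet P), IsDualLatticePt P ((d : ℝ) • φ)}

/-- `L_P(k)`, with `L_P(0) = 1`. -/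
def ehr (P : Set (Fin n → ℝ)) (k : ℕ) : ℕ :=
  if k = 0 then 1 else Set.ncard (latt ((k : ℝ) • P))

/-- The coefficientwise form of `Ehr_{P⊕Q}(t) = (1-t) Ehr_P(t) Ehr_Q(t)`. -/
def EhrEq (P Q : Set (Fin n → ℝ)) : Prop :=
  ∀ k : ℕ,
    (ehr (convexHull ℝ (P ∪ Q)) k : ℤ) =
      (∑ i ∈ Finset.range (k + 1), (ehr P i : ℤ) * (ehr Q (k - i) : ℤ)) -
        ∑ i ∈ Finset.range k, (ehr P i : ℤ) * (ehr Q (k - 1 - i) : ℤ)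

/-- `P` is reflexive: a lattice polytope containing the origin in its relative interior
whose polar dual is a lattice polytope. -/
def IsReflexive (P : Set (Fin n → ℝ)) : Prop :=
  IsLatPolytope P ∧ (0 : Fin n → ℝ) ∈ intrinsicInterior ℝ P ∧ DualIsLatticePolyhedron P

/-- `P` is Gorenstein of index `k`. -/
def IsGorenstein (P : Set (Fin n → ℝ)) (k : ℕ) : Prop :=
  IsLatPolytope P ∧ 0 < k ∧
    ∃ m : Fin n → ℝ, IsLat m ∧ IsReflexive ((fun x => x - m) '' ((k : ℝ) • P))

/-- `p` is a rational point. -/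
def IsRatPt (p : Fin n → ℝ) : Prop := ∀ i, ∃ q : ℚ, p i = (q : ℝ)

/-- Membership in the lattice `Λ^p` generated by `e_1, …, e_n` and `p`. -/
def InLambda (p x : Fin n → ℝ) : Prop :=
  ∃ (z : Fin n → ℤ) (c : ℤ), x = (fun i => (z i : ℝ)) + (c : ℝ) • p

/-- `den(p)`: the lcm of the denominators of the coordinates of `p`, i.e. the least
positive integer `r` with `r • p` a lattice point. -/
def denPt (p : Fin n → ℝ) : ℕ := sInf {r : ℕ | 0 < r ∧ IsLat ((r : ℝ) • p)}

/-- The projection `ε^p_J` parallel to `α(p)` onto the `p`-lower envelope of `cone J`. -/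
def epsP (p : Fin n → ℝ) (J : Set (Fin n → ℝ)) (x : Fin (n + 1) → ℝ) : Fin (n + 1) → ℝ :=
  x - sSup {l : ℝ | x - l • emb p ∈ cone J} • emb p

/-- The `p`-lower envelope of `cone J`. -/
def plenv (p : Fin n → ℝ) (J : Set (Fin n → ℝ)) : Set (Fin (n + 1) → ℝ) := epsP p J '' cone J

/-- The `p`-lower lattice envelope of `cone J`. -/
def pllenv (p : Fin n → ℝ) (J : Set (Fin n → ℝ)) : Set (Fin (n + 1) → ℝ) :=
  epsP p J '' latt (cone J)

/-- `J ⊕ K` is an affine free sum with common (rational) point `p`. -/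
def IsAffineFreeSum (J K : Set (Fin n → ℝ)) (p : Fin n → ℝ) : Prop :=
  IsRatPt p ∧ p ∈ J ∧ p ∈ K ∧
    ((affineSpan ℝ J : Set (Fin n → ℝ)) ∩ (affineSpan ℝ K : Set (Fin n → ℝ)) = {p}) ∧
    ∀ m : Fin n → ℝ, m ∈ Submodule.span ℝ ((fun x => x - p) '' (J ∪ K)) → InLambda p m →
      ∃! q : (Fin n → ℝ) × (Fin n → ℝ),
        (q.1 ∈ Submodule.span ℝ ((fun x => x - p) '' J) ∧ InLambda p q.1) ∧
        (q.2 ∈ Submodule.span ℝ ((fun x => x - p) '' K) ∧ InLambda p q.2) ∧ m = q.1 + q.2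


/-! ### Section A : coordinates -/

lemma eLast_castSucc (i : Fin n) : eLast n i.castSucc = 0 :=
  Pi.single_eq_of_ne (Fin.castSucc_lt_last i).ne 1

lemma eLast_last : eLast n (Fin.last n) = 1 := Pi.single_eq_same _ _

lemma mem_cone_iff {K : Set (Fin n → ℝ)} {x : Fin (n + 1) → ℝ} :
    x ∈ cone K ↔ 0 ≤ x (Fin.last n) ∧
      (fun i => x i.castSucc) ∈ x (Fin.last n) • K := by
  constructor
  · rintro ⟨l, a, haK, hl, rfl⟩
    have h1 : (l • emb a) (Fin.last n) = l := by
      simp [emb, Fin.snoc_last]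
    rw [h1]
    exact ⟨hl, ⟨a, haK, by funext i; simp [emb, Fin.snoc_castSucc]⟩⟩
  · rintro ⟨h0, a, haK, ha⟩
    refine ⟨x (Fin.last n), a, haK, h0, ?_⟩
    funext j
    refine Fin.lastCases ?_ ?_ j
    · simp [emb, Fin.snoc_last]
    · intro i
      have := congrFun ha i
      simp only [Pi.smul_apply, smul_eq_mul] at this ⊢
      simp [emb, Fin.snoc_castSucc, ← this]

/-- the set of admissible heights over `m` -/
def Sset (K : Set (Fin n → ℝ)) (m : Fin n → ℝ) : Set ℝ := {s : ℝ | 0 ≤ s ∧ m ∈ s • K}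

lemma sub_smul_eLast_mem {K : Set (Fin n → ℝ)} {x : Fin (n + 1) → ℝ} {l : ℝ} :
    x - l • eLast n ∈ cone K ↔ x (Fin.last n) - l ∈ Sset K (fun i => x i.castSucc) := by
  rw [mem_cone_iff]
  have h1 : (x - l • eLast n) (Fin.last n) = x (Fin.last n) - l := by
    simp [eLast_last]
  have h2 : (fun i : Fin n => (x - l • eLast n) i.castSucc) = fun i => x i.castSucc := by
    funext i; simp [eLast_castSucc]
  rw [h1, h2]; rfl

lemma csSup_shift {S : Set ℝ} (hne : S.Nonempty) (hbdd : BddBelow S) (t : ℝ) :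
    sSup {l : ℝ | t - l ∈ S} = t - sInf S := by
  apply IsLUB.csSup_eq
  · constructor
    · rintro l (hl : t - l ∈ S)
      have := csInf_le hbdd hl
      linarith
    · intro b hb
      have h : ∀ s ∈ S, t - b ≤ s := by
        intro s hs
        have hmem : (t - s) ∈ {l : ℝ | t - l ∈ S} := by
          simp only [mem_setOf_eq, sub_sub_cancel]; exact hs
        have := hb hmem
        linarith
      have := le_csInf hne h
      linarith
  · obtain ⟨s, hs⟩ := hne
    exact ⟨t - s, by simp only [mem_setOf_eq, sub_sub_cancel]; exact hs⟩

lemma Sset_nonempty_of_mem_cone {K : Set (Fin n → ℝ)} {x : Fin (n + 1) → ℝ}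
    (hx : x ∈ cone K) : (Sset K (fun i => x i.castSucc)).Nonempty := by
  rw [mem_cone_iff] at hx
  exact ⟨x (Fin.last n), hx.1, hx.2⟩

lemma Sset_bddBelow (K : Set (Fin n → ℝ)) (m : Fin n → ℝ) : BddBelow (Sset K m) :=
  ⟨0, fun s hs => hs.1⟩

lemma Sset_inf_nonneg {K : Set (Fin n → ℝ)} {m : Fin n → ℝ} (hne : (Sset K m).Nonempty) :
    0 ≤ sInf (Sset K m) :=
  le_csInf hne fun s hs => hs.1

lemma eps_apply {K : Set (Fin n → ℝ)} {x : Fin (n + 1) → ℝ} (hx : x ∈ cone K) :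
    eps K x = Fin.snoc (fun i => x i.castSucc)
      (sInf (Sset K (fun i => x i.castSucc))) := by
  have hset : {l : ℝ | x - l • eLast n ∈ cone K} =
      {l : ℝ | x (Fin.last n) - l ∈ Sset K (fun i => x i.castSucc)} := by
    ext l; exact sub_smul_eLast_mem
  have hne := Sset_nonempty_of_mem_cone hx
  unfold eps
  rw [hset, csSup_shift hne (Sset_bddBelow _ _)]
  funext j
  refine Fin.lastCases ?_ ?_ j
  · simp [Fin.snoc_last, eLast_last]
  · intro i
    simp [Fin.snoc_castSucc, eLast_castSucc]

lemma snoc_mem_cone_iff {K : Set (Fin n → ℝ)} {m : Fin n → ℝ} {s : ℝ} :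
    (Fin.snoc m s : Fin (n+1) → ℝ) ∈ cone K ↔ s ∈ Sset K m := by
  rw [mem_cone_iff]
  have h2 : (fun i => (Fin.snoc m s : Fin (n+1) → ℝ) i.castSucc) = m := by
    funext i; simp [Fin.snoc_castSucc]
  rw [Fin.snoc_last, h2]; rfl

lemma mem_lenv_iff {K : Set (Fin n → ℝ)} {y : Fin (n + 1) → ℝ} :
    y ∈ lenv K ↔ ∃ m : Fin n → ℝ, (Sset K m).Nonempty ∧
      y = Fin.snoc m (sInf (Sset K m)) := by
  constructor
  · rintro ⟨x, hx, rfl⟩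
    exact ⟨fun i => x i.castSucc, Sset_nonempty_of_mem_cone hx, eps_apply hx⟩
  · rintro ⟨m, ⟨s, hs⟩, rfl⟩
    have hx : (Fin.snoc m s : Fin (n+1) → ℝ) ∈ cone K := snoc_mem_cone_iff.mpr hs
    refine ⟨Fin.snoc m s, hx, ?_⟩
    rw [eps_apply hx]
    have h2 : (fun i => (Fin.snoc m s : Fin (n+1) → ℝ) i.castSucc) = m := by
      funext i; simp [Fin.snoc_castSucc]
    rw [h2]

lemma IsLat_snoc {m : Fin n → ℝ} {s : ℝ} (hm : IsLat m) (hs : ∃ z : ℤ, s = (z : ℝ)) :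
    IsLat (Fin.snoc m s : Fin (n+1) → ℝ) := by
  intro j
  refine Fin.lastCases ?_ ?_ j
  · rw [Fin.snoc_last]; exact hs
  · intro i; rw [Fin.snoc_castSucc]; exact hm i

/-! ### Section B : closure and monotonicity of `Sset` -/

lemma Sset_mono {K : Set (Fin n → ℝ)} (hconv : Convex ℝ K) (h0 : (0 : Fin n → ℝ) ∈ K)
    {m : Fin n → ℝ} {s t : ℝ} (hst : s ≤ t) (hs : s ∈ Sset K m) : t ∈ Sset K m := by
  obtain ⟨hs0, p, hpK, hpm⟩ := hs
  have ht0 : 0 ≤ t := hs0.trans hst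
  rcases eq_or_lt_of_le ht0 with h | ht
  · have : s = t := le_antisymm hst (h ▸ hs0)
    exact ⟨ht0, p, hpK, this ▸ hpm⟩
  · have hpm2 : s • p = m := hpm
    have hq : (s / t) • p + (1 - s / t) • (0 : Fin n → ℝ) ∈ K := by
      apply hconv hpK h0 (by positivity) (by rw [sub_nonneg]; exact div_le_one_of_le₀ hst ht.le)
      ring
    refine ⟨ht0, _, hq, ?_⟩
    show t • ((s / t) • p + (1 - s / t) • (0 : Fin n → ℝ)) = m
    rw [smul_add, smul_smul, smul_zero, smul_zero, add_zero, mul_div_cancel₀ _ ht.ne']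
    exact hpm2

lemma Sset_inf_mem {K : Set (Fin n → ℝ)} (hK : IsCompact K) (h0 : (0 : Fin n → ℝ) ∈ K)
    {m : Fin n → ℝ} (hne : (Sset K m).Nonempty) : sInf (Sset K m) ∈ Sset K m := by
  set μ := sInf (Sset K m) with hμdef
  have hbdd := Sset_bddBelow K m
  have hμ0 : 0 ≤ μ := Sset_inf_nonneg hne
  have hseq : ∀ k : ℕ, ∃ s, s ∈ Sset K m ∧ s < μ + 1 / ((k : ℝ) + 1) := by
    intro k
    have hlt : μ < μ + 1 / ((k : ℝ) + 1) := by
      have : (0:ℝ) < 1 / ((k : ℝ) + 1) := by positivity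
      linarith
    exact exists_lt_of_csInf_lt hne hlt
  choose g hg hglt using hseq
  have hgge : ∀ k, μ ≤ g k := fun k => csInf_le hbdd (hg k)
  have hgtend : Filter.Tendsto g Filter.atTop (nhds μ) := by
    have h2 : Filter.Tendsto (fun k : ℕ => μ + 1 / ((k : ℝ) + 1)) Filter.atTop (nhds (μ + 0)) :=
      Filter.Tendsto.add tendsto_const_nhds tendsto_one_div_add_atTop_nhds_zero_nat
    rw [add_zero] at h2
    exact tendsto_of_tendsto_of_tendsto_of_le_of_le tendsto_const_nhds h2 hgge
      (fun k => (hglt k).le)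
  rcases eq_or_lt_of_le hμ0 with h0μ | h0μ
  · refine ⟨hμ0, ?_⟩
    obtain ⟨C, hC⟩ := (hK.isBounded).exists_norm_le
    have hnorm : ∀ k, ‖m‖ ≤ g k * C := by
      intro k
      obtain ⟨hk0, p, hpK, hpm⟩ := hg k
      have hpm2 : g k • p = m := hpm
      rw [← hpm2, norm_smul, Real.norm_of_nonneg hk0]
      exact mul_le_mul_of_nonneg_left (hC p hpK) hk0
    have htc : Filter.Tendsto (fun k => g k * C) Filter.atTop (nhds (μ * C)) :=
      hgtend.mul_const C
    have hm0 : ‖m‖ ≤ μ * C := ge_of_tendsto htc (Filter.Eventually.of_forall hnorm)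
    rw [← h0μ, zero_mul] at hm0
    have : m = 0 := norm_le_zero_iff.mp hm0
    rw [← h0μ, Set.zero_smul_set ⟨0, h0⟩, this]
    rfl
  · refine ⟨hμ0, ?_⟩
    have hp : ∀ k, (g k)⁻¹ • m ∈ K := by
      intro k
      obtain ⟨_, p, hpK, hpm⟩ := hg k
      have hpm2 : g k • p = m := hpm
      have hgk : g k ≠ 0 := (h0μ.trans_le (hgge k)).ne'
      rw [← hpm2, smul_smul, inv_mul_cancel₀ hgk, one_smul]
      exact hpK
    have htend2 : Filter.Tendsto (fun k => (g k)⁻¹ • m) Filter.atTop (nhds (μ⁻¹ • m)) :=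
      (hgtend.inv₀ h0μ.ne').smul_const m
    have hmem := hK.isClosed.mem_of_tendsto htend2 (Filter.Eventually.of_forall hp)
    exact ⟨μ⁻¹ • m, hmem, by show μ • (μ⁻¹ • m) = m; rw [smul_smul, mul_inv_cancel₀ h0μ.ne', one_smul]⟩

lemma mem_llenv_iff {K : Set (Fin n → ℝ)} (hK : IsCompact K) (hconv : Convex ℝ K)
    (h0 : (0 : Fin n → ℝ) ∈ K) {y : Fin (n + 1) → ℝ} :
    y ∈ llenv K ↔ ∃ m : Fin n → ℝ, IsLat m ∧ (Sset K m).Nonempty ∧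
      y = Fin.snoc m (sInf (Sset K m)) := by
  constructor
  · rintro ⟨x, ⟨hx, hlat⟩, rfl⟩
    exact ⟨fun i => x i.castSucc, fun i => hlat i.castSucc, Sset_nonempty_of_mem_cone hx,
      eps_apply hx⟩
  · rintro ⟨m, hlat, hne, rfl⟩
    have hμmem := Sset_inf_mem hK h0 hne
    set μ := sInf (Sset K m) with hμdef
    have hceil : μ ≤ ((⌈μ⌉ : ℤ) : ℝ) := Int.le_ceil μ
    have hmem : ((⌈μ⌉ : ℤ) : ℝ) ∈ Sset K m := Sset_mono hconv h0 hceil hμmem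
    have hx : (Fin.snoc m ((⌈μ⌉ : ℤ) : ℝ) : Fin (n+1) → ℝ) ∈ cone K :=
      snoc_mem_cone_iff.mpr hmem
    refine ⟨_, ⟨hx, IsLat_snoc hlat ⟨⌈μ⌉, rfl⟩⟩, ?_⟩
    rw [eps_apply hx]
    have h2 : (fun i : Fin n => (Fin.snoc m ((⌈μ⌉ : ℤ) : ℝ) : Fin (n+1) → ℝ) i.castSucc) = m := by
      funext i; simp [Fin.snoc_castSucc]
    rw [h2]

/-! ### Section D : polyhedral duality -/

/-- rational vector -/
def IsRatVec (x : Fin n → ℝ) : Prop := ∀ i, ∃ q : ℚ, x i = (q : ℝ)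

lemma span_convexHull (s : Set (Fin n → ℝ)) :
    Submodule.span ℝ (convexHull ℝ s) = Submodule.span ℝ s := by
  refine le_antisymm (Submodule.span_le.mpr ?_) (Submodule.span_mono (subset_convexHull ℝ s))
  exact convexHull_min Submodule.subset_span (Submodule.span ℝ s).convex

lemma linear_le_on_convexHull {s : Set (Fin n → ℝ)} {f : (Fin n → ℝ) →ₗ[ℝ] ℝ} {c : ℝ}
    (h : ∀ v ∈ s, f v ≤ c) {x : Fin n → ℝ} (hx : x ∈ convexHull ℝ s) : f x ≤ c := by
  have : convexHull ℝ s ⊆ {w | f w ≤ c} :=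
    convexHull_min h (convex_halfSpace_le f.isLinear c)
  exact this hx

lemma linear_apply_centerMass {V : Finset (Fin n → ℝ)} {w : (Fin n → ℝ) → ℝ}
    (hw1 : ∑ v ∈ V, w v = 1) (f : (Fin n → ℝ) →ₗ[ℝ] ℝ) :
    f (V.centerMass w id) = ∑ v ∈ V, w v * f v := by
  rw [Finset.centerMass_eq_of_sum_1 _ _ hw1, map_sum]
  simp [smul_eq_mul]

/-- Step 1: existence of a supporting functional. -/
lemma step1 (N : ℕ) : ∀ V : Finset (Fin n → ℝ), V.card ≤ N →
    (0 : Fin n → ℝ) ∈ convexHull ℝ (V : Set (Fin n → ℝ)) →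
    ∀ (m : Fin n → ℝ) (μ : ℝ), 0 < μ → m ∈ μ • convexHull ℝ (V : Set (Fin n → ℝ)) →
    (∀ s : ℝ, 0 ≤ s → m ∈ s • convexHull ℝ (V : Set (Fin n → ℝ)) → μ ≤ s) →
    ∃ f : (Fin n → ℝ) →ₗ[ℝ] ℝ, (∀ v ∈ V, f v ≤ 1) ∧ f m = μ := by
  induction N with
  | zero =>
    intro V hcard h0 m μ hμ hm hmin
    interval_cases h : V.card
    · rw [Finset.card_eq_zero] at h
      subst h
      simp only [Finset.coe_empty, convexHull_empty] at h0
      exact absurd h0 (Set.notMem_empty _)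
  | succ N ih =>
    intro V hcard h0 m μ hμ hm hmin
    set P := convexHull ℝ (V : Set (Fin n → ℝ)) with hPdef
    have hPconv : Convex ℝ P := convex_convexHull ℝ _
    set Uv : Submodule ℝ (Fin n → ℝ) := Submodule.span ℝ (V : Set (Fin n → ℝ)) with hUdef
    have hPU : P ⊆ (Uv : Set (Fin n → ℝ)) :=
      convexHull_min Submodule.subset_span Uv.convex
    obtain ⟨W, hW⟩ := Submodule.exists_isCompl Uv
    set K' : Set (Fin n → ℝ) := μ • P + (W : Set (Fin n → ℝ)) with hK'def
    obtain ⟨p, hpP, hpm⟩ := hm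
    have hpm : μ • p = m := hpm
    have hmU : m ∈ Uv := by rw [← hpm]; exact Uv.smul_mem μ (hPU hpP)
    have hK'conv : Convex ℝ K' := (hPconv.smul μ).add W.convex
    have h0μP : (0 : Fin n → ℝ) ∈ μ • P := ⟨0, h0, smul_zero μ⟩
    have h0K' : (0 : Fin n → ℝ) ∈ K' := by
      rw [hK'def]
      exact ⟨0, h0μP, 0, W.zero_mem, by simp⟩
    have hWK' : (W : Set (Fin n → ℝ)) ⊆ K' := fun w hw => ⟨0, h0μP, w, hw, by simp⟩
    have hVK' : ∀ v ∈ V, μ • v ∈ K' := fun v hv =>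
      ⟨μ • v, ⟨v, subset_convexHull ℝ _ hv, rfl⟩, 0, W.zero_mem, by simp⟩
    -- span of K' is everything
    have hspanK' : Submodule.span ℝ K' = ⊤ := by
      have h1 : Uv ≤ Submodule.span ℝ K' := by
        rw [hUdef, Submodule.span_le]
        intro v hv
        have : μ • v ∈ Submodule.span ℝ K' := Submodule.subset_span (hVK' v hv)
        have h2 := (Submodule.span ℝ K').smul_mem μ⁻¹ this
        rwa [smul_smul, inv_mul_cancel₀ hμ.ne', one_smul] at h2
      have h2 : W ≤ Submodule.span ℝ K' := fun w hw => Submodule.subset_span (hWK' hw)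
      rw [eq_top_iff, ← hW.sup_eq_top]
      exact sup_le h1 h2
    have hint : (interior K').Nonempty := by
      rw [hK'conv.interior_nonempty_iff_affineSpan_eq_top]
      rw [AffineSubspace.affineSpan_eq_top_iff_vectorSpan_eq_top_of_nonempty ℝ _ _ ⟨0, h0K'⟩]
      rw [eq_top_iff, ← hspanK', vectorSpan_def]
      apply Submodule.span_mono
      intro x hx
      exact ⟨x, hx, 0, h0K', by simp⟩
    have hmnotin : m ∉ interior K' := by
      intro hmem
      rw [mem_interior_iff_mem_nhds, Metric.mem_nhds_iff] at hmem
      obtain ⟨ε, hε, hball⟩ := hmem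
      set δ : ℝ := ε / (2 * (‖m‖ + 1)) with hδdef
      have hm1 : (0:ℝ) < ‖m‖ + 1 := by positivity
      have hδ : 0 < δ := by positivity
      have hmem2 : (1 + δ) • m ∈ K' := by
        apply hball
        rw [Metric.mem_ball, dist_eq_norm]
        have : (1 + δ) • m - m = δ • m := by rw [add_smul, one_smul]; abel
        rw [this, norm_smul, Real.norm_of_nonneg hδ.le]
        have h2 : δ * (2 * (‖m‖ + 1)) = ε := div_mul_cancel₀ ε (by positivity)
        nlinarith [norm_nonneg m, hδ]
      obtain ⟨k, hk, w, hw, hkw⟩ := hmem2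
      have hkU : k ∈ Uv := by
        obtain ⟨q, hq, hqk⟩ := hk
        rw [← hqk]
        exact Uv.smul_mem μ (hPU hq)
      have hw0 : w = (0 : Fin n → ℝ) := by
        have hwU : w ∈ Uv := by
          have : w = (1 + δ) • m - k := by rw [← hkw, add_sub_cancel_left]
          rw [this]
          exact Uv.sub_mem (Uv.smul_mem _ hmU) hkU
        have := hW.disjoint.le_bot (Submodule.mem_inf.mpr ⟨hwU, hw⟩)
        simpa using this
      obtain ⟨q, hq, hqk⟩ := hk
      have hqk : μ • q = k := hqk
      have h1δ : (0:ℝ) < 1 + δ := by linarith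
      have hmq : m ∈ (μ / (1 + δ)) • P := by
        refine ⟨q, hq, ?_⟩
        have : (1 + δ) • m = μ • q := by
          rw [← hkw, hw0]; show k + 0 = μ • q; rw [add_zero, ← hqk]
        show (μ / (1 + δ)) • q = m
        rw [div_eq_mul_inv, mul_comm, mul_smul, ← this, smul_smul,
          inv_mul_cancel₀ h1δ.ne', one_smul]
      have := hmin _ (by positivity) hmq
      have : μ / (1 + δ) < μ := div_lt_self hμ (by linarith)
      linarith [hmin _ (le_of_lt (by positivity : (0:ℝ) < μ / (1+δ))) hmq]
    obtain ⟨f₀, hf₀⟩ := geometric_hahn_banach_open_point (hK'conv.interior)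
      isOpen_interior hmnotin
    set c : ℝ := f₀ m with hcdef
    obtain ⟨y0, hy0⟩ := hint
    have hle : ∀ x ∈ K', f₀ x ≤ c := by
      intro x hx
      by_contra hcon
      push_neg at hcon
      set D : ℝ := |f₀ y0 - f₀ x| + 1 with hDdef
      have hD : 0 < D := by positivity
      set t : ℝ := min (1/2) ((f₀ x - c) / (2 * D)) with htdef
      have ht0 : 0 < t := by
        apply lt_min (by norm_num)
        have : 0 < f₀ x - c := by linarith
        positivity
      have ht1 : t ≤ 1/2 := min_le_left _ _
      have hz : t • y0 + (1 - t) • x ∈ interior K' :=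
        hK'conv.combo_interior_self_mem_interior hy0 hx ht0 (by linarith) (by ring)
      have hzval := hf₀ _ hz
      have hfz : f₀ (t • y0 + (1 - t) • x) = t * f₀ y0 + (1 - t) * f₀ x := by
        rw [map_add, map_smul, map_smul]; rfl
      rw [hfz] at hzval
      have htD : t * D ≤ (f₀ x - c) / 2 := by
        have h1 : t ≤ (f₀ x - c) / (2 * D) := min_le_right _ _
        calc t * D ≤ ((f₀ x - c) / (2 * D)) * D := by nlinarith
        _ = (f₀ x - c) / 2 := by field_simp
      have habs : -(|f₀ y0 - f₀ x|) ≤ f₀ y0 - f₀ x := neg_abs_le _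
      have hDa : |f₀ y0 - f₀ x| ≤ D := by rw [hDdef]; linarith
      nlinarith [mul_le_mul_of_nonneg_left hDa ht0.le]
    have hW0 : ∀ w ∈ W, f₀ w = 0 := by
      intro w hw
      have hall : ∀ t : ℝ, t * f₀ w ≤ c := by
        intro t
        have : t • w ∈ K' := hWK' (W.smul_mem t hw)
        have := hle _ this
        rwa [map_smul, smul_eq_mul] at this
      by_contra hne
      have h1 := hall ((c + 1) / f₀ w)
      rw [div_mul_cancel₀ _ hne] at h1
      linarith
    have hc0 : 0 ≤ c := by
      have := hle 0 h0K'
      simpa using this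
    rcases eq_or_lt_of_le hc0 with hc | hc
    · -- degenerate case: recurse
      have hvle : ∀ v ∈ V, f₀ v ≤ 0 := by
        intro v hv
        have := hle _ (hVK' v hv)
        rw [map_smul, smul_eq_mul, ← hc] at this
        nlinarith
      have hexv : ∃ v ∈ V, f₀ v < 0 := by
        by_contra hcon
        push_neg at hcon
        have hall0 : ∀ v ∈ V, f₀ v = 0 := fun v hv => le_antisymm (hvle v hv) (hcon v hv)
        have hker : (⊤ : Submodule ℝ (Fin n → ℝ)) ≤ LinearMap.ker (f₀ : (Fin n → ℝ) →ₗ[ℝ] ℝ) := by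
          rw [← hW.sup_eq_top]
          apply sup_le
          · apply Submodule.span_le.mpr
            intro v hv
            exact LinearMap.mem_ker.mpr (hall0 v hv)
          · intro w hw
            exact LinearMap.mem_ker.mpr (hW0 w hw)
        have : f₀ y0 < c := hf₀ _ hy0
        have hy00 : f₀ y0 = 0 := hker (Submodule.mem_top) 
        rw [hy00, ← hc] at this
        exact lt_irrefl 0 this
      -- the subpolytope
      set V' : Finset (Fin n → ℝ) := V.filter (fun v => f₀ v = 0) with hV'def
      have hV'sub : V' ⊆ V := Finset.filter_subset _ _
      have hV'card : V'.card ≤ N := by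
        obtain ⟨v, hv, hvlt⟩ := hexv
        have : V' ⊂ V := ⟨hV'sub, fun hsub => by
          have := Finset.mem_filter.mp (hsub hv)
          exact absurd this.2 hvlt.ne⟩
        have := Finset.card_lt_card this
        omega
      -- membership transfer
      have htrans : ∀ x, x ∈ P → f₀ x = 0 → x ∈ convexHull ℝ (V' : Set (Fin n → ℝ)) := by
        intro x hxP hx0
        rw [hPdef, Finset.convexHull_eq] at hxP
        obtain ⟨w, hw0, hw1, hwx⟩ := hxP
        have hterm : ∀ v ∈ V, w v * f₀ v = 0 := by
          apply (Finset.sum_eq_zero_iff_of_nonpos ?_).mp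
          · have : f₀ (V.centerMass w id) = ∑ v ∈ V, w v * f₀ v :=
              linear_apply_centerMass hw1 (f₀ : (Fin n → ℝ) →ₗ[ℝ] ℝ)
            rw [hwx] at this
            rw [← this, hx0]
          · intro v hv
            exact mul_nonpos_of_nonneg_of_nonpos (hw0 v hv) (hvle v hv)
        have hwzero : ∀ v ∈ V, v ∉ V' → w v = 0 := by
          intro v hv hv'
          have hfv : f₀ v ≠ 0 := fun h => hv' (Finset.mem_filter.mpr ⟨hv, h⟩)
          have := hterm v hv
          exact (mul_eq_zero.mp this).resolve_right hfv
        have hsum' : ∑ v ∈ V', w v = 1 := by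
          rw [← hw1]
          exact Finset.sum_subset hV'sub (fun v hv hv' => hwzero v hv hv')
        have hcm : V'.centerMass w id = V.centerMass w id := by
          rw [Finset.centerMass_eq_of_sum_1 _ _ hsum', Finset.centerMass_eq_of_sum_1 _ _ hw1]
          apply Finset.sum_subset hV'sub
          intro v hv hv'
          rw [hwzero v hv hv', zero_smul]
        rw [Finset.convexHull_eq]
        exact ⟨w, fun v hv => hw0 v (hV'sub hv), hsum', by rw [hcm, hwx]⟩
      have h0' : (0 : Fin n → ℝ) ∈ convexHull ℝ (V' : Set (Fin n → ℝ)) :=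
        htrans 0 h0 (map_zero _)
      have hp0 : f₀ p = 0 := by
        have : f₀ m = 0 := hc.symm
        rw [← hpm, map_smul, smul_eq_mul] at this
        rcases mul_eq_zero.mp this with h | h
        · exact absurd h hμ.ne'
        · exact h
      have hm' : m ∈ μ • convexHull ℝ (V' : Set (Fin n → ℝ)) :=
        ⟨p, htrans p hpP hp0, hpm⟩
      have hmin' : ∀ s : ℝ, 0 ≤ s → m ∈ s • convexHull ℝ (V' : Set (Fin n → ℝ)) → μ ≤ s := by
        intro s hs hms
        apply hmin s hs
        have hsub2 : convexHull ℝ (V' : Set (Fin n → ℝ)) ⊆ P :=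
          convexHull_mono (by exact_mod_cast Finset.coe_subset.mpr hV'sub)
        exact Set.smul_set_mono hsub2 hms
      obtain ⟨g, hgV', hgm⟩ := ih V' hV'card h0' m μ hμ hm' hmin'
      -- extension
      set Vneg : Finset (Fin n → ℝ) := V.filter (fun v => f₀ v < 0) with hVnegdef
      have hVnegne : Vneg.Nonempty := by
        obtain ⟨v, hv, hvlt⟩ := hexv
        exact ⟨v, Finset.mem_filter.mpr ⟨hv, hvlt⟩⟩
      set T : ℝ := max 0 (Vneg.sup' hVnegne (fun v => (g v - 1) / (- f₀ v))) with hTdef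
      have hT0 : 0 ≤ T := le_max_left _ _
      refine ⟨g + T • (f₀ : (Fin n → ℝ) →ₗ[ℝ] ℝ), ?_, ?_⟩
      · intro v hv
        simp only [LinearMap.add_apply, LinearMap.smul_apply, smul_eq_mul,
          ContinuousLinearMap.coe_coe]
        rcases eq_or_lt_of_le (hvle v hv) with h | h
        · have hv' : v ∈ V' := Finset.mem_filter.mpr ⟨hv, h⟩
          rw [h, mul_zero, add_zero]
          exact hgV' v hv'

        · have hvneg : v ∈ Vneg := Finset.mem_filter.mpr ⟨hv, h⟩
          have hsup : (g v - 1) / (- f₀ v) ≤ T :=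
            le_trans (Finset.le_sup' (fun v => (g v - 1) / (- f₀ v)) hvneg) (le_max_right _ _)
          have hpos : 0 < - f₀ v := by linarith
          rw [div_le_iff₀ hpos] at hsup
          nlinarith
      · simp only [LinearMap.add_apply, LinearMap.smul_apply, smul_eq_mul,
          ContinuousLinearMap.coe_coe]
        have : f₀ m = 0 := hc.symm
        rw [hgm, this, mul_zero, add_zero]
    · -- main case c > 0
      refine ⟨(μ / c) • (f₀ : (Fin n → ℝ) →ₗ[ℝ] ℝ), ?_, ?_⟩
      · intro v hv
        have := hle _ (hVK' v hv)
        rw [map_smul, smul_eq_mul] at this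
        simp only [LinearMap.smul_apply, smul_eq_mul, ContinuousLinearMap.coe_coe]
        rw [div_mul_eq_mul_div, div_le_one hc]
        exact this
      · simp only [LinearMap.smul_apply, smul_eq_mul, ContinuousLinearMap.coe_coe]
        rw [← hcdef, div_mul_cancel₀ _ hc.ne']

/-- active set of a functional -/
def actSet (V : Finset (Fin n → ℝ)) (f : (Fin n → ℝ) →ₗ[ℝ] ℝ) : Set (Fin n → ℝ) :=
  {v : Fin n → ℝ | v ∈ V ∧ f v = 1}

/-- Step 2: augmenting a supporting functional to a vertex of the dual. -/
lemma step2 (V : Finset (Fin n → ℝ)) : ∀ (k : ℕ) (f : (Fin n → ℝ) →ₗ[ℝ] ℝ),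
    (∀ v ∈ V, f v ≤ 1) →
    Module.finrank ℝ (Submodule.span ℝ (V : Set (Fin n → ℝ))) -
      Module.finrank ℝ (Submodule.span ℝ (actSet V f)) ≤ k →
    ∃ g : (Fin n → ℝ) →ₗ[ℝ] ℝ, (∀ v ∈ V, g v ≤ 1) ∧ (∀ v ∈ V, f v = 1 → g v = 1) ∧
      Submodule.span ℝ (actSet V g) = Submodule.span ℝ (V : Set (Fin n → ℝ)) := by
  intro k
  induction k with
  | zero =>
    intro f hf hk
    have hle : Submodule.span ℝ (actSet V f) ≤ Submodule.span ℝ (V : Set (Fin n → ℝ)) :=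
      Submodule.span_mono (fun v hv => hv.1)
    refine ⟨f, hf, fun _ _ h => h, ?_⟩
    apply Submodule.eq_of_le_of_finrank_le hle
    omega
  | succ k ih =>
    intro f hf hk
    by_cases hspan : Submodule.span ℝ (actSet V f) = Submodule.span ℝ (V : Set (Fin n → ℝ))
    · exact ⟨f, hf, fun _ _ h => h, hspan⟩
    · have hle : Submodule.span ℝ (actSet V f) ≤ Submodule.span ℝ (V : Set (Fin n → ℝ)) :=
        Submodule.span_mono (fun v hv => hv.1)
      obtain ⟨x, hxV, hxact⟩ := SetLike.exists_of_lt (lt_of_le_of_ne hle hspan)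
      obtain ⟨ψ₀, hψ₀x, hψ₀map⟩ :=
        Submodule.exists_dual_map_eq_bot_of_notMem hxact inferInstance
      have hψ₀0 : ∀ u ∈ Submodule.span ℝ (actSet V f), ψ₀ u = 0 := by
        intro u hu
        have : ψ₀ u ∈ Submodule.map ψ₀ (Submodule.span ℝ (actSet V f)) := ⟨u, hu, rfl⟩
        rw [hψ₀map] at this
        simpa using this
      -- find a vertex with nonzero value, positive after sign flip
      have hψv : ∃ v ∈ V, ψ₀ v ≠ 0 := by
        by_contra hcon
        push_neg at hcon
        have : Submodule.span ℝ (V : Set (Fin n → ℝ)) ≤ LinearMap.ker ψ₀ := by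
          apply Submodule.span_le.mpr
          intro v hv
          exact LinearMap.mem_ker.mpr (hcon v hv)
        exact hψ₀x (this hxV)
      obtain ⟨v₁, hv₁V, hv₁⟩ := hψv
      obtain ⟨ψ, hψ0, hψv₁⟩ : ∃ ψ : (Fin n → ℝ) →ₗ[ℝ] ℝ,
          (∀ u ∈ Submodule.span ℝ (actSet V f), ψ u = 0) ∧ 0 < ψ v₁ := by
        rcases lt_or_gt_of_ne hv₁ with h | h
        · exact ⟨-ψ₀, fun u hu => by simp [hψ₀0 u hu], by simpa using h⟩
        · exact ⟨ψ₀, hψ₀0, h⟩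
      set Vpos : Finset (Fin n → ℝ) := V.filter (fun v => 0 < ψ v) with hVposdef
      have hVposne : Vpos.Nonempty := ⟨v₁, Finset.mem_filter.mpr ⟨hv₁V, hψv₁⟩⟩
      set t : ℝ := Vpos.inf' hVposne (fun v => (1 - f v) / ψ v) with htdef
      have ht0 : 0 ≤ t := by
        apply Finset.le_inf'
        intro v hv
        obtain ⟨hvV, hvpos⟩ := Finset.mem_filter.mp hv
        exact div_nonneg (by linarith [hf v hvV]) hvpos.le
      set g' : (Fin n → ℝ) →ₗ[ℝ] ℝ := f + t • ψ with hg'def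
      have hg'le : ∀ v ∈ V, g' v ≤ 1 := by
        intro v hv
        simp only [hg'def, LinearMap.add_apply, LinearMap.smul_apply, smul_eq_mul]
        rcases le_or_gt (ψ v) 0 with h | h
        · nlinarith [hf v hv]
        · have hmem : v ∈ Vpos := Finset.mem_filter.mpr ⟨hv, h⟩
          have hinf : t ≤ (1 - f v) / ψ v := Finset.inf'_le _ hmem
          rw [le_div_iff₀ h] at hinf
          linarith
      have hkeep : ∀ v ∈ V, f v = 1 → g' v = 1 := by
        intro v hv hf1
        have hvact : v ∈ Submodule.span ℝ (actSet V f) :=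
          Submodule.subset_span ⟨hv, hf1⟩
        simp only [hg'def, LinearMap.add_apply, LinearMap.smul_apply, smul_eq_mul]
        rw [hψ0 v hvact, mul_zero, add_zero, hf1]
      obtain ⟨vm, hvm, hvmt⟩ := Finset.exists_mem_eq_inf' hVposne (fun v => (1 - f v) / ψ v)
      obtain ⟨hvmV, hvmpos⟩ := Finset.mem_filter.mp hvm
      have hvmact : g' vm = 1 := by
        simp only [hg'def, LinearMap.add_apply, LinearMap.smul_apply, smul_eq_mul]
        rw [htdef, hvmt, div_mul_cancel₀ _ hvmpos.ne']
        ring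
      have hvmnot : vm ∉ Submodule.span ℝ (actSet V f) := by
        intro hmem
        rw [hψ0 vm hmem] at hvmpos
        exact lt_irrefl 0 hvmpos
      have hsub : actSet V f ⊆ actSet V g' := fun v hv => ⟨hv.1, hkeep v hv.1 hv.2⟩
      have hlt : Submodule.span ℝ (actSet V f) < Submodule.span ℝ (actSet V g') := by
        rw [SetLike.lt_iff_le_and_exists]
        exact ⟨Submodule.span_mono hsub, vm,
          Submodule.subset_span ⟨hvmV, hvmact⟩, hvmnot⟩
      have hrank := Submodule.finrank_lt_finrank_of_lt hlt
      have hle2 : Submodule.span ℝ (actSet V g') ≤ Submodule.span ℝ (V : Set (Fin n → ℝ)) :=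
        Submodule.span_mono (fun v hv => hv.1)
      have hrank2 : Module.finrank ℝ (Submodule.span ℝ (actSet V g')) ≤
          Module.finrank ℝ (Submodule.span ℝ (V : Set (Fin n → ℝ))) :=
        Submodule.finrank_mono hle2
      obtain ⟨g, h1, h2, h3⟩ := ih g' hg'le (by omega)
      exact ⟨g, h1, fun v hv hf1 => h2 v hv (hkeep v hv hf1), h3⟩


/-! ### extreme point criteria -/

lemma dual_ext {U : Submodule ℝ (Fin n → ℝ)} {S : Set (Fin n → ℝ)}
    (hspan : Submodule.span ℝ S = U) (φ ψ : Module.Dual ℝ U)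
    (h : ∀ v ∈ S, ∀ hv : v ∈ U, φ ⟨v, hv⟩ = ψ ⟨v, hv⟩) : φ = ψ := by
  have key : ∀ x, x ∈ Submodule.span ℝ S → ∀ hx : x ∈ U, φ ⟨x, hx⟩ = ψ ⟨x, hx⟩ := by
    intro x hx
    induction hx using Submodule.span_induction with
    | mem v hv => exact h v hv
    | zero =>
      intro h0
      have e : (⟨0, h0⟩ : U) = 0 := rfl
      rw [e, map_zero, map_zero]
    | add x y hx hy ihx ihy =>
      intro hxy
      have hxU : x ∈ U := hspan ▸ hx
      have hyU : y ∈ U := hspan ▸ hy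
      have e : (⟨x + y, hxy⟩ : U) = ⟨x, hxU⟩ + ⟨y, hyU⟩ := rfl
      rw [e, map_add, map_add, ihx hxU, ihy hyU]
    | smul r x hx ihx =>
      intro hrx
      have hxU : x ∈ U := hspan ▸ hx
      have e : (⟨r • x, hrx⟩ : U) = r • ⟨x, hxU⟩ := rfl
      rw [e, map_smul, map_smul, ihx hxU]
  apply LinearMap.ext
  rintro ⟨a, ha⟩
  have ha' : a ∈ Submodule.span ℝ S := by rw [hspan]; exact ha
  exact key a ha' ha

lemma restrict_mem_dualSet {V : Finset (Fin n → ℝ)} {f : (Fin n → ℝ) →ₗ[ℝ] ℝ}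
    (hf : ∀ v ∈ V, f v ≤ 1) :
    f.comp (Submodule.span ℝ (convexHull ℝ (V : Set (Fin n → ℝ)))).subtype ∈
      dualSet (convexHull ℝ (V : Set (Fin n → ℝ))) := by
  intro a ha
  exact linear_le_on_convexHull hf ha

lemma mem_span_of_mem_V {V : Finset (Fin n → ℝ)} {v : Fin n → ℝ} (hv : v ∈ V) :
    v ∈ Submodule.span ℝ (convexHull ℝ (V : Set (Fin n → ℝ))) :=
  Submodule.subset_span (subset_convexHull ℝ _ hv)

lemma extreme_of_spanning {V : Finset (Fin n → ℝ)} {g : (Fin n → ℝ) →ₗ[ℝ] ℝ}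
    (hg : ∀ v ∈ V, g v ≤ 1)
    (hspan : Submodule.span ℝ (actSet V g) =
      Submodule.span ℝ (convexHull ℝ (V : Set (Fin n → ℝ)))) :
    g.comp (Submodule.span ℝ (convexHull ℝ (V : Set (Fin n → ℝ)))).subtype ∈
      Set.extremePoints ℝ (dualSet (convexHull ℝ (V : Set (Fin n → ℝ)))) := by
  refine ⟨restrict_mem_dualSet hg, ?_⟩
  intro x₁ hx₁ x₂ hx₂ hseg
  obtain ⟨a, b, ha, hb, hab, habφ⟩ := hseg
  have hval : ∀ v ∈ actSet V g,
      ∀ hv : v ∈ Submodule.span ℝ (convexHull ℝ (V : Set (Fin n → ℝ))),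
      x₁ ⟨v, hv⟩ = g v ∧ x₂ ⟨v, hv⟩ = g v := by
    rintro v ⟨hvV, hv1⟩ hv
    have h1 : x₁ ⟨v, hv⟩ ≤ 1 := hx₁ ⟨v, hv⟩ (subset_convexHull ℝ (V : Set (Fin n → ℝ)) hvV)
    have h2 : x₂ ⟨v, hv⟩ ≤ 1 := hx₂ ⟨v, hv⟩ (subset_convexHull ℝ (V : Set (Fin n → ℝ)) hvV)
    have h3 := LinearMap.congr_fun habφ ⟨v, hv⟩
    have h4 : g.comp (Submodule.span ℝ (convexHull ℝ (V : Set (Fin n → ℝ)))).subtype ⟨v, hv⟩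
        = g v := rfl
    rw [h4, hv1] at h3
    simp only [LinearMap.add_apply, LinearMap.smul_apply, smul_eq_mul] at h3
    rw [hv1]
    constructor
    · nlinarith
    · nlinarith
  · apply dual_ext hspan
    intro v hv h
    have h4 : g.comp (Submodule.span ℝ (convexHull ℝ (V : Set (Fin n → ℝ)))).subtype ⟨v, h⟩
        = g v := rfl
    rw [h4]
    exact (hval v hv h).1

lemma spanning_of_extreme {V : Finset (Fin n → ℝ)}
    {f : (Fin n → ℝ) →ₗ[ℝ] ℝ}
    (hφ : f.comp (Submodule.span ℝ (convexHull ℝ (V : Set (Fin n → ℝ)))).subtype ∈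
      Set.extremePoints ℝ (dualSet (convexHull ℝ (V : Set (Fin n → ℝ))))) :
    Submodule.span ℝ (actSet V f) =
      Submodule.span ℝ (convexHull ℝ (V : Set (Fin n → ℝ))) := by
  have hfV : ∀ v ∈ V, f v ≤ 1 := by
    intro v hv
    exact hφ.1 ⟨v, mem_span_of_mem_V hv⟩ (subset_convexHull ℝ (V : Set (Fin n → ℝ)) hv)
  by_contra hne
  have hle : Submodule.span ℝ (actSet V f) ≤
      Submodule.span ℝ (convexHull ℝ (V : Set (Fin n → ℝ))) := by
    apply Submodule.span_le.mpr
    intro v hv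
    exact mem_span_of_mem_V hv.1
  obtain ⟨x, hxU, hxact⟩ := SetLike.exists_of_lt (lt_of_le_of_ne hle hne)
  obtain ⟨ψ, hψx, hψmap⟩ := Submodule.exists_dual_map_eq_bot_of_notMem hxact inferInstance
  have hψ0 : ∀ u ∈ Submodule.span ℝ (actSet V f), ψ u = 0 := by
    intro u hu
    have : ψ u ∈ Submodule.map ψ (Submodule.span ℝ (actSet V f)) := ⟨u, hu, rfl⟩
    rw [hψmap] at this
    simpa using this
  set Vne : Finset (Fin n → ℝ) := V.filter (fun v => ψ v ≠ 0) with hVnedef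
  have hVnene : Vne.Nonempty := by
    by_contra hcon
    rw [Finset.not_nonempty_iff_eq_empty, Finset.filter_eq_empty_iff] at hcon
    push_neg at hcon
    have hker : Submodule.span ℝ (convexHull ℝ (V : Set (Fin n → ℝ))) ≤ LinearMap.ker ψ := by
      rw [span_convexHull]
      apply Submodule.span_le.mpr
      intro v hv
      exact LinearMap.mem_ker.mpr (hcon hv)
    exact hψx (hker hxU)
  set ε : ℝ := Vne.inf' hVnene (fun v => (1 - f v) / |ψ v|) with hεdef
  have hε : 0 < ε := by
    rw [hεdef, Finset.lt_inf'_iff]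
    intro v hv
    obtain ⟨hvV, hvne⟩ := Finset.mem_filter.mp hv
    have hlt : f v < 1 := by
      rcases lt_or_eq_of_le (hfV v hvV) with h | h
      · exact h
      · exact absurd (hψ0 v (Submodule.subset_span ⟨hvV, h⟩)) hvne
    exact div_pos (by linarith) (abs_pos.mpr hvne)
  have hbound : ∀ v ∈ V, ε * |ψ v| ≤ 1 - f v := by
    intro v hv
    by_cases hvne : ψ v = 0
    · rw [hvne]
      simp only [abs_zero, mul_zero]
      linarith [hfV v hv]
    · have hmem : v ∈ Vne := Finset.mem_filter.mpr ⟨hv, hvne⟩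
      have h5 := Finset.inf'_le (fun v => (1 - f v) / |ψ v|) hmem
      rw [← hεdef] at h5
      rw [← le_div_iff₀ (abs_pos.mpr hvne)]
      exact h5
  have hmem1 : (f - ε • ψ).comp
      (Submodule.span ℝ (convexHull ℝ (V : Set (Fin n → ℝ)))).subtype ∈
      dualSet (convexHull ℝ (V : Set (Fin n → ℝ))) := by
    apply restrict_mem_dualSet
    intro v hv
    simp only [LinearMap.sub_apply, LinearMap.smul_apply, smul_eq_mul]
    have h1 := hbound v hv
    have h2 : -(ε * |ψ v|) ≤ ε * ψ v := by
      have := neg_abs_le (ψ v)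
      nlinarith
    linarith
  have hmem2 : (f + ε • ψ).comp
      (Submodule.span ℝ (convexHull ℝ (V : Set (Fin n → ℝ)))).subtype ∈
      dualSet (convexHull ℝ (V : Set (Fin n → ℝ))) := by
    apply restrict_mem_dualSet
    intro v hv
    simp only [LinearMap.add_apply, LinearMap.smul_apply, smul_eq_mul]
    have h1 := hbound v hv
    have h2 : ε * ψ v ≤ ε * |ψ v| := by
      have := le_abs_self (ψ v)
      nlinarith
    linarith
  have hseg : f.comp (Submodule.span ℝ (convexHull ℝ (V : Set (Fin n → ℝ)))).subtype ∈
      openSegment ℝ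
        ((f - ε • ψ).comp (Submodule.span ℝ (convexHull ℝ (V : Set (Fin n → ℝ)))).subtype)
        ((f + ε • ψ).comp (Submodule.span ℝ (convexHull ℝ (V : Set (Fin n → ℝ)))).subtype) := by
    refine ⟨1/2, 1/2, by norm_num, by norm_num, by norm_num, ?_⟩
    apply LinearMap.ext
    rintro ⟨a, ha⟩
    show (1:ℝ)/2 * ((f - ε • ψ) a) + 1/2 * ((f + ε • ψ) a) = f a
    simp only [LinearMap.sub_apply, LinearMap.add_apply, LinearMap.smul_apply, smul_eq_mul]
    ring
  have heq := (hφ.2 hmem1 hmem2 hseg)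
  have hψa := LinearMap.congr_fun heq ⟨x, hxU⟩
  have hred : ((f - ε • ψ).comp
      (Submodule.span ℝ (convexHull ℝ (V : Set (Fin n → ℝ)))).subtype) ⟨x, hxU⟩
      = f x - ε * ψ x := rfl
  have hred2 : (f.comp
      (Submodule.span ℝ (convexHull ℝ (V : Set (Fin n → ℝ)))).subtype) ⟨x, hxU⟩ = f x := rfl
  rw [hred, hred2] at hψa
  have h0 : ε * ψ x = 0 := by linarith
  rcases mul_eq_zero.mp h0 with h | h
  · exact absurd h hε.ne'
  · exact hψx h

/-! ### rational spans -/

lemma rat_smul_eq (q : ℚ) (x : Fin n → ℝ) : q • x = (q : ℝ) • x := by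
  funext i
  simp [Rat.smul_def]

lemma rat_span_descent : ∀ (N : ℕ) (S : Finset (Fin n → ℝ)), S.card ≤ N →
    (∀ v ∈ S, IsRatVec v) → ∀ a : Fin n → ℝ, IsRatVec a →
    a ∈ Submodule.span ℝ (S : Set (Fin n → ℝ)) →
    a ∈ Submodule.span ℚ (S : Set (Fin n → ℝ)) := by
  intro N
  induction N with
  | zero =>
    intro S hcard _ a _ ha
    have : S = ∅ := Finset.card_eq_zero.mp (by omega)
    subst this
    simp only [Finset.coe_empty, Submodule.span_empty, Submodule.mem_bot] at ha
    rw [ha]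
    exact Submodule.zero_mem _
  | succ N ih =>
    intro S hcard hrat a hra ha
    rcases S.eq_empty_or_nonempty with rfl | ⟨v0, hv0S⟩
    · simp only [Finset.coe_empty, Submodule.span_empty, Submodule.mem_bot] at ha
      rw [ha]
      exact Submodule.zero_mem _
    by_cases hv00 : v0 = 0
    · have hcoe : (S : Set (Fin n → ℝ)) = insert 0 ((S.erase v0 : Finset _) : Set _) := by
        rw [← Finset.coe_insert, ← hv00, Finset.insert_erase hv0S]
      rw [hcoe, Submodule.span_insert_zero] at ha ⊢
      exact ih (S.erase v0) (by have := Finset.card_erase_of_mem hv0S; omega)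
        (fun v hv => hrat v (Finset.erase_subset _ _ hv)) a hra ha
    · obtain ⟨j, hj⟩ : ∃ j, v0 j ≠ 0 := by
        by_contra hcon
        push_neg at hcon
        exact hv00 (funext hcon)
      set T : Finset (Fin n → ℝ) := (S.erase v0).image (fun v => v - (v j / v0 j) • v0)
        with hTdef
      have hTcard : T.card ≤ N := by
        have h1 : T.card ≤ (S.erase v0).card := Finset.card_image_le
        have h2 := Finset.card_erase_of_mem hv0S
        omega
      have hTrat : ∀ w ∈ T, IsRatVec w := by
        intro w hw
        obtain ⟨v, hvS, rfl⟩ := Finset.mem_image.mp hw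
        have hvS' : v ∈ S := Finset.erase_subset _ _ hvS
        intro i
        obtain ⟨qvi, hqvi⟩ := hrat v hvS' i
        obtain ⟨qvj, hqvj⟩ := hrat v hvS' j
        obtain ⟨q0i, hq0i⟩ := hrat v0 hv0S i
        obtain ⟨q0j, hq0j⟩ := hrat v0 hv0S j
        refine ⟨qvi - qvj / q0j * q0i, ?_⟩
        have : (v - (v j / v0 j) • v0) i = v i - v j / v0 j * v0 i := rfl
        rw [this, hqvi, hqvj, hq0i, hq0j]
        push_cast
        ring
      have hjT : ∀ w ∈ (T : Set (Fin n → ℝ)), w j = 0 := by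
        intro w hw
        obtain ⟨v, hvS, rfl⟩ := Finset.mem_image.mp hw
        have : (v - (v j / v0 j) • v0) j = v j - v j / v0 j * v0 j := rfl
        rw [this, div_mul_cancel₀ _ hj, sub_self]
      have hspanS : Submodule.span ℝ (S : Set (Fin n → ℝ)) =
          Submodule.span ℝ (insert v0 (T : Set (Fin n → ℝ))) := by
        apply le_antisymm
        · apply Submodule.span_le.mpr
          intro v hvS
          by_cases hvv0 : v = v0
          · exact Submodule.subset_span (hvv0 ▸ Set.mem_insert _ _)
          · have hvT : v - (v j / v0 j) • v0 ∈ (T : Set (Fin n → ℝ)) :=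
              Finset.mem_coe.mpr (Finset.mem_image_of_mem _
                (Finset.mem_erase.mpr ⟨hvv0, hvS⟩))
            have h1 : v - (v j / v0 j) • v0 ∈ Submodule.span ℝ (insert v0 (T : Set _)) :=
              Submodule.subset_span (Set.mem_insert_iff.mpr (Or.inr hvT))
            have h2 : (v j / v0 j) • v0 ∈ Submodule.span ℝ (insert v0 (T : Set _)) :=
              Submodule.smul_mem _ _ (Submodule.subset_span (Set.mem_insert _ _))
            have := Submodule.add_mem _ h1 h2
            rwa [sub_add_cancel] at this
        · apply Submodule.span_le.mpr
          intro w hw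
          rcases Set.mem_insert_iff.mp hw with rfl | hwT
          · exact Submodule.subset_span (Finset.mem_coe.mpr hv0S)
          · obtain ⟨v, hvS, rfl⟩ := Finset.mem_image.mp (Finset.mem_coe.mp hwT)
            have hvS' : v ∈ S := Finset.erase_subset _ _ hvS
            exact Submodule.sub_mem _ (Submodule.subset_span (Finset.mem_coe.mpr hvS'))
              (Submodule.smul_mem _ _ (Submodule.subset_span (Finset.mem_coe.mpr hv0S)))
      rw [hspanS] at ha
      obtain ⟨r, z, hz, haz⟩ := Submodule.mem_span_insert.mp ha
      have hzj : z j = 0 := by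
        have hTker : Submodule.span ℝ (T : Set (Fin n → ℝ)) ≤
            LinearMap.ker (LinearMap.proj j : ((Fin n → ℝ) →ₗ[ℝ] ℝ)) := by
          apply Submodule.span_le.mpr
          intro w hw
          exact LinearMap.mem_ker.mpr (hjT w hw)
        exact hTker hz
      have hrval : r = a j / v0 j := by
        have : a j = r * v0 j + z j := by rw [haz]; rfl
        rw [hzj, add_zero] at this
        rw [this, mul_div_cancel_right₀ _ hj]
      have ha' : a - (a j / v0 j) • v0 ∈ Submodule.span ℝ (T : Set (Fin n → ℝ)) := by
        have h3 : a - r • v0 = z := by rw [haz]; abel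
        have : a - (a j / v0 j) • v0 = z := by rw [← hrval]; exact h3
        rw [this]
        exact hz
      have hra' : IsRatVec (a - (a j / v0 j) • v0) := by
        intro i
        obtain ⟨qai, hqai⟩ := hra i
        obtain ⟨qaj, hqaj⟩ := hra j
        obtain ⟨q0i, hq0i⟩ := hrat v0 hv0S i
        obtain ⟨q0j, hq0j⟩ := hrat v0 hv0S j
        refine ⟨qai - qaj / q0j * q0i, ?_⟩
        have : (a - (a j / v0 j) • v0) i = a i - a j / v0 j * v0 i := rfl
        rw [this, hqai, hqaj, hq0i, hq0j]
        push_cast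
        ring
      have haT := ih T hTcard hTrat _ hra' ha'
      -- now transfer back into the ℚ-span of S
      have hsmulQ : ∀ (v : Fin n → ℝ), v ∈ S → ∀ x : Fin n → ℝ,
          x ∈ Submodule.span ℚ (S : Set (Fin n → ℝ)) → IsRatVec x →
          True := fun _ _ _ _ _ => trivial
      have hscalar : ∀ v ∈ S, ∃ q : ℚ, v j / v0 j = (q : ℝ) := by
        intro v hv
        obtain ⟨qvj, hqvj⟩ := hrat v hv j
        obtain ⟨q0j, hq0j⟩ := hrat v0 hv0S j
        exact ⟨qvj / q0j, by rw [hqvj, hq0j]; push_cast; ring⟩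
      have hTsub : (T : Set (Fin n → ℝ)) ⊆
          (Submodule.span ℚ (S : Set (Fin n → ℝ)) : Set (Fin n → ℝ)) := by
        intro w hw
        obtain ⟨v, hvS, rfl⟩ := Finset.mem_image.mp (Finset.mem_coe.mp hw)
        have hvS' : v ∈ S := Finset.erase_subset _ _ hvS
        obtain ⟨q, hq⟩ := hscalar v hvS'
        have : (v j / v0 j) • v0 = q • v0 := by rw [hq, rat_smul_eq]
        rw [this]
        exact Submodule.sub_mem _ (Submodule.subset_span (Finset.mem_coe.mpr hvS'))
          (Submodule.smul_mem _ _ (Submodule.subset_span (Finset.mem_coe.mpr hv0S)))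
      have h1 : a - (a j / v0 j) • v0 ∈ Submodule.span ℚ (S : Set (Fin n → ℝ)) :=
        Submodule.span_le.mpr hTsub haT
      obtain ⟨qaj, hqaj⟩ := hra j
      obtain ⟨q0j, hq0j⟩ := hrat v0 hv0S j
      have hq : a j / v0 j = ((qaj / q0j : ℚ) : ℝ) := by
        rw [hqaj, hq0j]; push_cast; ring
      have h2 : (a j / v0 j) • v0 ∈ Submodule.span ℚ (S : Set (Fin n → ℝ)) := by
        rw [hq, ← rat_smul_eq]
        exact Submodule.smul_mem _ _ (Submodule.subset_span (Finset.mem_coe.mpr hv0S))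
      have := Submodule.add_mem _ h1 h2
      rwa [sub_add_cancel] at this

lemma rat_eval {S : Finset (Fin n → ℝ)} {f : (Fin n → ℝ) →ₗ[ℝ] ℝ}
    (hf : ∀ v ∈ S, ∃ q : ℚ, f v = (q : ℝ)) {a : Fin n → ℝ}
    (ha : a ∈ Submodule.span ℚ (S : Set (Fin n → ℝ))) :
    ∃ q : ℚ, f a = (q : ℝ) := by
  induction ha using Submodule.span_induction with
  | mem v hv => exact hf v (Finset.mem_coe.mp hv)
  | zero => exact ⟨0, by simp⟩
  | add x y _ _ ihx ihy =>
    obtain ⟨qx, hqx⟩ := ihx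
    obtain ⟨qy, hqy⟩ := ihy
    exact ⟨qx + qy, by rw [map_add, hqx, hqy]; push_cast; ring⟩
  | smul q x _ ihx =>
    obtain ⟨qx, hqx⟩ := ihx
    refine ⟨q * qx, ?_⟩
    rw [rat_smul_eq, map_smul, smul_eq_mul, hqx]
    push_cast
    ring

/-! ### finiteness and denominators -/

lemma exists_ambient (U : Submodule ℝ (Fin n → ℝ)) (φ : Module.Dual ℝ U) :
    ∃ f : (Fin n → ℝ) →ₗ[ℝ] ℝ, f.comp U.subtype = φ := by
  obtain ⟨W, hW⟩ := Submodule.exists_isCompl U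
  refine ⟨(φ.comp (U.projectionOnto W hW) : (Fin n → ℝ) →ₗ[ℝ] ℝ), ?_⟩
  apply LinearMap.ext
  rintro ⟨a, ha⟩
  show φ (U.projectionOnto W hW ((⟨a, ha⟩ : U) : Fin n → ℝ)) = φ ⟨a, ha⟩
  rw [Submodule.projectionOnto_apply_left hW ⟨a, ha⟩]

/-- the active vertex finset of a dual functional -/
def actFin (V : Finset (Fin n → ℝ))
    (φ : Module.Dual ℝ (Submodule.span ℝ (convexHull ℝ (V : Set (Fin n → ℝ))))) :
    Finset (Fin n → ℝ) :=
  V.filter (fun v => ∀ h : v ∈ Submodule.span ℝ (convexHull ℝ (V : Set (Fin n → ℝ))),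
    φ ⟨v, h⟩ = 1)

lemma extremePoints_finite (V : Finset (Fin n → ℝ)) :
    (Set.extremePoints ℝ (dualSet (convexHull ℝ (V : Set (Fin n → ℝ))))).Finite := by
  apply Set.Finite.of_finite_image (f := actFin V)
  · apply Set.Finite.subset (V.powerset).finite_toSet
    rintro S ⟨φ, _, rfl⟩
    exact Finset.mem_coe.mpr (Finset.mem_powerset.mpr (Finset.filter_subset _ _))
  · intro φ₁ hφ₁ φ₂ hφ₂ heq
    obtain ⟨f₁, hf₁⟩ := exists_ambient _ φ₁
    have hspan₁ := spanning_of_extreme (hf₁ ▸ hφ₁)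
    apply dual_ext hspan₁
    rintro v ⟨hvV, hv1⟩ hv
    have hval₁ : φ₁ ⟨v, hv⟩ = 1 := by
      rw [← hf₁]
      exact hv1
    have hvfin : v ∈ actFin V φ₁ := by
      apply Finset.mem_filter.mpr ⟨hvV, ?_⟩
      intro h
      exact hval₁
    rw [heq] at hvfin
    have hval₂ : φ₂ ⟨v, hv⟩ = 1 := (Finset.mem_filter.mp hvfin).2 hv
    rw [hval₁, hval₂]

/-- cast of an integer vector -/
def castLin : (Fin n → ℤ) →ₗ[ℤ] (Fin n → ℝ) where
  toFun z := fun i => (z i : ℝ)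
  map_add' a b := by
    funext i
    show ((a i + b i : ℤ) : ℝ) = (a i : ℝ) + (b i : ℝ)
    push_cast
    ring
  map_smul' c z := by
    funext i
    show ((c • z) i : ℝ) = (c • fun i => ((z i : ℝ))) i
    simp [zsmul_eq_mul]

/-- integer points of a subspace -/
def latSub (U : Submodule ℝ (Fin n → ℝ)) : Submodule ℤ (Fin n → ℤ) where
  carrier := {z | castLin z ∈ U}
  add_mem' := by
    intro a b ha hb
    show castLin (a + b) ∈ U
    rw [map_add]
    exact U.add_mem ha hb
  zero_mem' := by
    show castLin 0 ∈ U
    rw [map_zero]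
    exact U.zero_mem
  smul_mem' := by
    intro c z hz
    show castLin (c • z) ∈ U
    rw [map_smul]
    exact Submodule.smul_of_tower_mem U c hz

lemma rat_den_mul_int (q : ℚ) {d : ℕ} (hdvd : q.den ∣ d) : ∃ z : ℤ, (d : ℝ) * (q : ℝ) = z := by
  obtain ⟨k, hk⟩ := hdvd
  refine ⟨(k : ℤ) * q.num, ?_⟩
  have hdne : ((q.den : ℝ)) ≠ 0 := (Nat.cast_pos.mpr q.pos).ne'
  have hden : ((q.den : ℝ)) * (q : ℝ) = (q.num : ℝ) := by
    rw [Rat.cast_def, mul_comm, div_mul_cancel₀ _ hdne]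
  rw [hk]
  push_cast
  linear_combination (k : ℝ) * hden

lemma exists_denom (V : Finset (Fin n → ℝ)) (hVrat : ∀ v ∈ V, IsRatVec v) :
    ∃ d : ℕ, 0 < d ∧ ∀ φ ∈ Set.extremePoints ℝ (dualSet (convexHull ℝ (V : Set (Fin n → ℝ)))),
      IsDualLatticePt (convexHull ℝ (V : Set (Fin n → ℝ))) ((d : ℝ) • φ) := by
  classical
  set U := Submodule.span ℝ (convexHull ℝ (V : Set (Fin n → ℝ))) with hUdef
  obtain ⟨G, hG⟩ := IsNoetherian.noetherian (latSub U)
  have hEfin := extremePoints_finite V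
  set EF := hEfin.toFinset with hEFdef
  -- rational values of extreme functionals on lattice generators
  have key : ∀ φ ∈ Set.extremePoints ℝ (dualSet (convexHull ℝ (V : Set (Fin n → ℝ)))),
      ∀ z : Fin n → ℤ, castLin z ∈ U →
      ∃ q : ℚ, ∀ h : castLin z ∈ U, φ ⟨castLin z, h⟩ = (q : ℝ) := by
    intro φ hφ z hzU
    obtain ⟨f, hf⟩ := exists_ambient _ φ
    have hspan := spanning_of_extreme (hf ▸ hφ)
    set Sf : Finset (Fin n → ℝ) := V.filter (fun v => f v = 1) with hSfdef
    have hSfcoe : (Sf : Set (Fin n → ℝ)) = actSet V f := by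
      ext v
      simp [hSfdef, actSet, Finset.mem_filter]
    have hmemspan : castLin z ∈ Submodule.span ℝ (Sf : Set (Fin n → ℝ)) := by
      rw [hSfcoe, hspan]
      exact hzU
    have hrat : IsRatVec (castLin z) := fun i => ⟨(z i : ℚ), by push_cast; rfl⟩
    have hQ := rat_span_descent Sf.card Sf le_rfl
      (fun v hv => hVrat v (Finset.mem_filter.mp hv).1) _ hrat hmemspan
    obtain ⟨q, hq⟩ := rat_eval (f := f)
      (fun v hv => ⟨1, by rw [(Finset.mem_filter.mp hv).2]; norm_num⟩) hQ
    refine ⟨q, fun h => ?_⟩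
    rw [← hf]
    exact hq
  -- choice of rational values
  set qv : Module.Dual ℝ U → (Fin n → ℤ) → ℚ := fun φ z =>
    if h : ∃ q : ℚ, ∀ hh : castLin z ∈ U, φ ⟨castLin z, hh⟩ = (q : ℝ) then h.choose else 1
    with hqvdef
  set d : ℕ := ∏ φ ∈ EF, ∏ z ∈ G, (qv φ z).den with hddef
  have hdpos : 0 < d := by
    apply Finset.prod_pos
    intro φ _
    apply Finset.prod_pos
    intro z _
    exact (qv φ z).pos
  refine ⟨d, hdpos, ?_⟩
  intro φ hφ a halat
  obtain ⟨f, hf⟩ := exists_ambient _ φ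
  -- the integer vector of a
  have hz : ∃ z : Fin n → ℤ, castLin z = (a : Fin n → ℝ) := by
    choose w hw using halat
    exact ⟨w, by funext i; exact (hw i).symm⟩
  obtain ⟨z, hza⟩ := hz
  have hzU : z ∈ latSub U := by
    show castLin z ∈ U
    rw [hza]
    exact a.2
  rw [← hG] at hzU
  obtain ⟨c, -, hc⟩ := Submodule.mem_span_finset.mp hzU
  -- values on generators are rationals with denominators dividing d
  have hgen : ∀ g ∈ G, ∃ k : ℤ, (d : ℝ) * f (castLin g) = (k : ℝ) := by
    intro g hg
    have hgU : castLin g ∈ U := by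
      have : g ∈ latSub U := by
        rw [← hG]
        exact Submodule.subset_span (Finset.mem_coe.mpr hg)
      exact this
    have hex : ∃ q : ℚ, ∀ hh : castLin g ∈ U, φ ⟨castLin g, hh⟩ = (q : ℝ) :=
      key φ hφ g hgU
    have hval : f (castLin g) = ((qv φ g : ℚ) : ℝ) := by
      have h1 := hex.choose_spec hgU
      have h2 : qv φ g = hex.choose := by rw [hqvdef]; simp only [dif_pos hex]
      rw [h2, ← h1, ← hf]
      rfl
    rw [hval]
    apply rat_den_mul_int
    have h1 : (qv φ g).den ∣ ∏ z ∈ G, (qv φ z).den :=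
      Finset.dvd_prod_of_mem (fun z => (qv φ z).den) hg
    have h2 : (∏ z ∈ G, (qv φ z).den) ∣ d := by
      rw [hddef]
      exact Finset.dvd_prod_of_mem (fun ψ => ∏ z ∈ G, (qv ψ z).den)
        (hEfin.mem_toFinset.mpr hφ)
    exact dvd_trans h1 h2
  choose k hk using hgen
  refine ⟨∑ g ∈ G.attach, c g * k g g.2, ?_⟩
  have hφa : φ a = f (castLin z) := by
    rw [← hf]
    show f ((a : Fin n → ℝ)) = f (castLin z)
    rw [hza]
  have hFz : f (castLin z) = ∑ g ∈ G, (c g : ℝ) * f (castLin g) := by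
    rw [← hc, map_sum, map_sum]
    apply Finset.sum_congr rfl
    intro g _
    rw [map_smul, LinearMap.map_smul_of_tower, zsmul_eq_mul]
  show ((d : ℝ) • φ) a = _
  rw [LinearMap.smul_apply, smul_eq_mul, hφa, hFz, Finset.mul_sum]
  rw [← Finset.sum_attach G (fun g => (d:ℝ) * ((c g : ℝ) * f (castLin g)))]
  push_cast
  apply Finset.sum_congr rfl
  intro g _
  rw [← hk g.1 g.2]
  ring

lemma dualDen_mem {V : Finset (Fin n → ℝ)} (hVrat : ∀ v ∈ V, IsRatVec v) :
    0 < dualDen (convexHull ℝ (V : Set (Fin n → ℝ))) ∧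
    ∀ φ ∈ Set.extremePoints ℝ (dualSet (convexHull ℝ (V : Set (Fin n → ℝ)))),
      IsDualLatticePt (convexHull ℝ (V : Set (Fin n → ℝ)))
        ((dualDen (convexHull ℝ (V : Set (Fin n → ℝ))) : ℝ) • φ) := by
  obtain ⟨d0, hd0, hd0prop⟩ := exists_denom V hVrat
  exact Nat.sInf_mem (⟨d0, hd0, hd0prop⟩ :
    {d : ℕ | 0 < d ∧ ∀ φ ∈ Set.extremePoints ℝ
      (dualSet (convexHull ℝ (V : Set (Fin n → ℝ)))),
      IsDualLatticePt (convexHull ℝ (V : Set (Fin n → ℝ))) ((d : ℝ) • φ)}.Nonempty)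

lemma core {V : Finset (Fin n → ℝ)} (hVrat : ∀ v ∈ V, IsRatVec v)
    (h0 : (0 : Fin n → ℝ) ∈ convexHull ℝ (V : Set (Fin n → ℝ)))
    {m : Fin n → ℝ} (hlat : IsLat m)
    (hne : (Sset (convexHull ℝ (V : Set (Fin n → ℝ))) m).Nonempty) :
    ∃ z : ℤ, (dualDen (convexHull ℝ (V : Set (Fin n → ℝ))) : ℝ) *
      sInf (Sset (convexHull ℝ (V : Set (Fin n → ℝ))) m) = (z : ℝ) := by
  have hcomp : IsCompact (convexHull ℝ (V : Set (Fin n → ℝ))) :=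
    V.finite_toSet.isCompact_convexHull ℝ
  have hμmem := Sset_inf_mem hcomp h0 hne
  set μ := sInf (Sset (convexHull ℝ (V : Set (Fin n → ℝ))) m) with hμdef
  have hμ0 : 0 ≤ μ := Sset_inf_nonneg hne
  rcases eq_or_lt_of_le hμ0 with h | hμpos
  · exact ⟨0, by rw [← h]; simp⟩
  · have hmin : ∀ s : ℝ, 0 ≤ s → m ∈ s • convexHull ℝ (V : Set (Fin n → ℝ)) → μ ≤ s :=
      fun s hs hm => csInf_le (Sset_bddBelow _ _) ⟨hs, hm⟩
    obtain ⟨f, hfV, hfm⟩ := step1 V.card V le_rfl h0 m μ hμpos hμmem.2 hmin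
    obtain ⟨g, hgV, hgact, hgspan⟩ := step2 V
      (Module.finrank ℝ (Submodule.span ℝ (V : Set (Fin n → ℝ)))) f hfV (by omega)
    obtain ⟨p, hpP, hpm⟩ := hμmem.2
    have hpm : μ • p = m := hpm
    have hmU : m ∈ Submodule.span ℝ (convexHull ℝ (V : Set (Fin n → ℝ))) := by
      rw [← hpm]
      exact Submodule.smul_mem _ _ (Submodule.subset_span hpP)
    rw [Finset.convexHull_eq] at hpP
    obtain ⟨w, hw0, hw1, hwp⟩ := hpP
    have hfp' : f p = ∑ v ∈ V, w v * f v := by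
      rw [← hwp]
      exact linear_apply_centerMass hw1 f
    have hfmμ : f m = μ * f p := by rw [← hpm, map_smul, smul_eq_mul]
    have heq1 : μ * 1 = μ * f p := by rw [mul_one]; exact hfm.symm.trans hfmμ
    have hfp : f p = 1 := (mul_left_cancel₀ hμpos.ne' heq1).symm
    have hsum0 : ∑ v ∈ V, w v * (1 - f v) = 0 := by
      have hsplit : ∑ v ∈ V, w v * (1 - f v) =
          (∑ v ∈ V, w v) - ∑ v ∈ V, w v * f v := by
        rw [← Finset.sum_sub_distrib]
        apply Finset.sum_congr rfl
        intro v _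
        ring
      rw [hsplit, hw1, ← hfp', hfp]
      ring
    have hterm := (Finset.sum_eq_zero_iff_of_nonneg
      (fun v hv => mul_nonneg (hw0 v hv) (by linarith [hfV v hv]))).mp hsum0
    have hgp' : g p = ∑ v ∈ V, w v * g v := by
      rw [← hwp]
      exact linear_apply_centerMass hw1 g
    have hsummeq : ∑ v ∈ V, w v * g v = ∑ v ∈ V, w v := by
      apply Finset.sum_congr rfl
      intro v hv
      rcases eq_or_ne (w v) 0 with h | h
      · rw [h, zero_mul]
      · have hf1 : f v = 1 := by
          rcases mul_eq_zero.mp (hterm v hv) with h' | h'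
          · exact absurd h' h
          · linarith
        rw [hgact v hv hf1, mul_one]
    have hgp : g p = 1 := by rw [hgp', hsummeq, hw1]
    have hgm : g m = μ := by rw [← hpm, map_smul, smul_eq_mul, hgp, mul_one]
    have hspanP : Submodule.span ℝ (actSet V g) =
        Submodule.span ℝ (convexHull ℝ (V : Set (Fin n → ℝ))) := by
      rw [hgspan, span_convexHull]
    have hφ := extreme_of_spanning hgV hspanP
    obtain ⟨hdpos, hdprop⟩ := dualDen_mem hVrat
    obtain ⟨z, hz⟩ := hdprop _ hφ ⟨m, hmU⟩ hlat
    refine ⟨z, ?_⟩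
    have hvz : ((dualDen (convexHull ℝ (V : Set (Fin n → ℝ))) : ℝ) •
        (g.comp (Submodule.span ℝ (convexHull ℝ (V : Set (Fin n → ℝ)))).subtype)) ⟨m, hmU⟩
        = (dualDen (convexHull ℝ (V : Set (Fin n → ℝ))) : ℝ) * g m := rfl
    rw [hvz, hgm] at hz
    exact hz

/-! ### assembly -/

lemma snoc_add_smul_eLast (m : Fin n → ℝ) (μ c : ℝ) :
    (Fin.snoc m μ : Fin (n+1) → ℝ) + c • eLast n = Fin.snoc m (μ + c) := by
  funext j
  refine Fin.lastCases ?_ ?_ j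
  · simp [eLast_last, Fin.snoc_last]
  · intro i
    simp [eLast_castSucc, Fin.snoc_castSucc]

lemma piece_mem {K : Set (Fin n → ℝ)} {c : ℝ} {y : Fin (n+1) → ℝ}
    (hy : y ∈ (fun x => x - c • eLast n) ''
      latt ((fun x => x + c • eLast n) '' lenv K)) :
    y ∈ lenv K ∧ IsLat (y + c • eLast n) := by
  obtain ⟨a, ⟨⟨w, hw, rfl⟩, hlat⟩, rfl⟩ := hy
  show w + c • eLast n - c • eLast n ∈ lenv K ∧
    IsLat (w + c • eLast n - c • eLast n + c • eLast n)
  have he : w + c • eLast n - c • eLast n = w := add_sub_cancel_right _ _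
  rw [he]
  exact ⟨hw, hlat⟩

lemma piece_mem' {K : Set (Fin n → ℝ)} {c : ℝ} {y : Fin (n+1) → ℝ}
    (h1 : y ∈ lenv K) (h2 : IsLat (y + c • eLast n)) :
    y ∈ (fun x => x - c • eLast n) ''
      latt ((fun x => x + c • eLast n) '' lenv K) := by
  refine ⟨y + c • eLast n, ⟨⟨y, h1, rfl⟩, h2⟩, ?_⟩
  show y + c • eLast n - c • eLast n = y
  exact add_sub_cancel_right _ _

theorem main_statement {n : ℕ} (hn : 1 ≤ n) (P : Set (Fin n → ℝ))
    (hP : IsRatPolytope P) (hP0 : (0 : Fin n → ℝ) ∈ P) :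
    (llenv P = ⋃ i ∈ Finset.range (dualDen P),
        (fun x => x - ((i : ℝ) / (dualDen P : ℝ)) • eLast n) ''
          latt ((fun x => x + ((i : ℝ) / (dualDen P : ℝ)) • eLast n) '' lenv P)) ∧
      ∀ i ∈ Finset.range (dualDen P), ∀ j ∈ Finset.range (dualDen P), i ≠ j →
        Disjoint
          ((fun x => x - ((i : ℝ) / (dualDen P : ℝ)) • eLast n) ''
            latt ((fun x => x + ((i : ℝ) / (dualDen P : ℝ)) • eLast n) '' lenv P))
          ((fun x => x - ((j : ℝ) / (dualDen P : ℝ)) • eLast n) ''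
            latt ((fun x => x + ((j : ℝ) / (dualDen P : ℝ)) • eLast n) '' lenv P)) := by
  obtain ⟨V, hVrat, rfl⟩ := hP
  have hVrat' : ∀ v ∈ V, IsRatVec v := hVrat
  have hcomp : IsCompact (convexHull ℝ (V : Set (Fin n → ℝ))) :=
    V.finite_toSet.isCompact_convexHull ℝ
  have hconv : Convex ℝ (convexHull ℝ (V : Set (Fin n → ℝ))) := convex_convexHull ℝ _
  obtain ⟨hdpos, -⟩ := dualDen_mem hVrat'
  set D : ℕ := dualDen (convexHull ℝ (V : Set (Fin n → ℝ))) with hDdef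
  have hDne : (D : ℝ) ≠ 0 := Nat.cast_ne_zero.mpr hdpos.ne'
  constructor
  · ext y
    simp only [Set.mem_iUnion, Finset.mem_range, exists_prop]
    constructor
    · intro hy
      rw [mem_llenv_iff hcomp hconv hP0] at hy
      obtain ⟨m, hlat, hne, rfl⟩ := hy
      obtain ⟨z, hz⟩ := core hVrat' hP0 hlat hne
      set μ := sInf (Sset (convexHull ℝ (V : Set (Fin n → ℝ))) m) with hμdef
      have hμ0 : 0 ≤ μ := Sset_inf_nonneg hne
      have hmk : ∀ (i t : ℤ), (z + i) = (D : ℤ) * t → μ + (i : ℝ) / (D : ℝ) = (t : ℝ) := by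
        intro i t hit
        have h1 : μ + (i : ℝ) / (D : ℝ) = ((D : ℝ) * μ + i) / D := by
          rw [add_div]
          congr 1
          rw [mul_comm, mul_div_assoc, div_self hDne, mul_one]
        rw [h1, hz]
        have h2 : ((z : ℝ) + (i : ℝ)) = (D : ℝ) * (t : ℝ) := by exact_mod_cast hit
        rw [h2]
        exact mul_div_cancel_left₀ _ hDne
      have hdiv := Int.mul_ediv_add_emod z (D : ℤ)
      have hr0 : 0 ≤ z % (D : ℤ) := Int.emod_nonneg z (by exact_mod_cast hdpos.ne')
      have hrlt : z % (D : ℤ) < (D : ℤ) := Int.emod_lt_of_pos z (by exact_mod_cast hdpos)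
      by_cases hr00 : z % (D : ℤ) = 0
      · refine ⟨0, hdpos, ?_⟩
        apply piece_mem'
        · exact mem_lenv_iff.mpr ⟨m, hne, rfl⟩
        · have hlast : μ + (0 : ℝ) / (D : ℝ) = ((z / (D : ℤ) : ℤ) : ℝ) := by
            have h6 : z + (0 : ℤ) = (D : ℤ) * (z / (D : ℤ)) := by
              linarith [hdiv, hr00]
            simpa using hmk 0 (z / (D : ℤ)) h6
          rw [snoc_add_smul_eLast]
          apply IsLat_snoc hlat
          exact ⟨z / (D : ℤ), by rw [← hlast]; norm_num⟩
      · set i : ℕ := ((D : ℤ) - z % (D : ℤ)).toNat with hidef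
        have hieq : (i : ℤ) = (D : ℤ) - z % (D : ℤ) := Int.toNat_of_nonneg (by omega)
        refine ⟨i, by omega, ?_⟩
        apply piece_mem'
        · exact mem_lenv_iff.mpr ⟨m, hne, rfl⟩
        · have hlast : μ + (i : ℝ) / (D : ℝ) = ((z / (D : ℤ) + 1 : ℤ) : ℝ) := by
            apply hmk
            have : (z + (i:ℤ)) = (D : ℤ) * (z / (D : ℤ) + 1) := by
              rw [hieq]
              ring_nf
              omega
            exact this
          rw [snoc_add_smul_eLast]
          apply IsLat_snoc hlat
          exact ⟨z / (D : ℤ) + 1, by rw [← hlast]⟩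
    · rintro ⟨i, hiD, hy⟩
      obtain ⟨h1, h2⟩ := piece_mem hy
      rw [mem_lenv_iff] at h1
      obtain ⟨m, hne, rfl⟩ := h1
      rw [mem_llenv_iff hcomp hconv hP0]
      refine ⟨m, ?_, hne, rfl⟩
      intro k
      have := h2 k.castSucc
      rw [snoc_add_smul_eLast] at this
      rwa [Fin.snoc_castSucc] at this
  · intro i hi j hj hij
    rw [Finset.mem_range] at hi hj
    rw [Set.disjoint_left]
    intro y hyi hyj
    obtain ⟨-, h2i⟩ := piece_mem hyi
    obtain ⟨-, h2j⟩ := piece_mem hyj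
    obtain ⟨zi, hzi⟩ := h2i (Fin.last n)
    obtain ⟨zj, hzj⟩ := h2j (Fin.last n)
    have hvi : (y + ((i : ℝ) / (D : ℝ)) • eLast n) (Fin.last n)
        = y (Fin.last n) + (i : ℝ) / (D : ℝ) := by
      simp [eLast_last]
    have hvj : (y + ((j : ℝ) / (D : ℝ)) • eLast n) (Fin.last n)
        = y (Fin.last n) + (j : ℝ) / (D : ℝ) := by
      simp [eLast_last]
    rw [hvi] at hzi
    rw [hvj] at hzj
    have hdiff : (i : ℝ) / (D : ℝ) - (j : ℝ) / (D : ℝ) = (zi : ℝ) - (zj : ℝ) := by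
      linarith
    have hcast : (i : ℝ) - (j : ℝ) = (D : ℝ) * ((zi : ℝ) - (zj : ℝ)) := by
      field_simp at hdiff
      linarith
    have hint : (i : ℤ) - (j : ℤ) = (D : ℤ) * (zi - zj) := by
      exact_mod_cast hcast
    have hiD : (i : ℤ) < D := by exact_mod_cast hi
    have hjD : (j : ℤ) < D := by exact_mod_cast hj
    have hijZ : (i : ℤ) ≠ (j : ℤ) := by exact_mod_cast hij
    have hdvd : (D : ℤ) ∣ ((i : ℤ) - (j : ℤ)) := ⟨zi - zj, hint⟩
    have habs : |(i : ℤ) - (j : ℤ)| < (D : ℤ) := by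
      rw [abs_lt]
      omega
    have := Int.eq_zero_of_abs_lt_dvd hdvd habs
    omega


/-- Proposition 4.1(a) (the lower lattice envelope as a disjoint union of
shifted lattice lower envelopes). -/
theorem llenv_disjoint_union_shifted {n : ℕ} (hn : 1 ≤ n) (P : Set (Fin n → ℝ))
    (hP : IsRatPolytope P) (hP0 : (0 : Fin n → ℝ) ∈ P) :
    (llenv P = ⋃ i ∈ Finset.range (dualDen P),
        (fun x => x - ((i : ℝ) / (dualDen P : ℝ)) • eLast n) ''
          latt ((fun x => x + ((i : ℝ) / (dualDen P : ℝ)) • eLast n) '' lenv P)) ∧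
      ∀ i ∈ Finset.range (dualDen P), ∀ j ∈ Finset.range (dualDen P), i ≠ j →
        Disjoint
          ((fun x => x - ((i : ℝ) / (dualDen P : ℝ)) • eLast n) ''
            latt ((fun x => x + ((i : ℝ) / (dualDen P : ℝ)) • eLast n) '' lenv P))
          ((fun x => x - ((j : ℝ) / (dualDen P : ℝ)) • eLast n) ''
            latt ((fun x => x + ((j : ℝ) / (dualDen P : ℝ)) • eLast n) '' lenv P)) :=
  main_statement hn P hP hP0

end ArxivFreeSum
end
end

section
/- Let J ⊂ ℝ^n be a compact convex set and let ρ be a rational number. Then (lenv(cone J) + ρe_{n+1}) ∩ ℤ^{n+1} ≠ ∅ if and only if (lenv(cone J) − ρe_{n+1}) ∩ ℤ^{n+1} ≠ ∅. -/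
open Set Pointwise
open scoped Classical

noncomputable section

namespace ArxivFreeSum

variable {n : ℕ}

lemma smul_mem_cone' {J : Set (Fin n → ℝ)} {y : Fin (n + 1) → ℝ} (hy : y ∈ cone J)
    {t : ℝ} (ht : 0 ≤ t) : t • y ∈ cone J := by
  obtain ⟨l, a, ha, hl, rfl⟩ := hy
  exact ⟨t * l, a, ha, mul_nonneg ht hl, by rw [mul_smul]⟩

lemma eps_smul' {J : Set (Fin n → ℝ)} (y : Fin (n + 1) → ℝ)
    {t : ℝ} (ht : 0 < t) : eps J (t • y) = t • eps J y := by
  have hset : {l : ℝ | t • y - l • eLast n ∈ cone J}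
      = t • {l : ℝ | y - l • eLast n ∈ cone J} := by
    ext l
    simp only [Set.mem_smul_set, Set.mem_setOf_eq]
    constructor
    · intro h
      refine ⟨l / t, ?_, by rw [smul_eq_mul]; field_simp [ht.ne']⟩
      have := smul_mem_cone' h (le_of_lt (inv_pos.mpr ht))
      have heq : t⁻¹ • (t • y - l • eLast n) = y - (l / t) • eLast n := by
        rw [smul_sub, smul_smul, smul_smul, inv_mul_cancel₀ ht.ne', one_smul,
          div_eq_inv_mul]
      rwa [heq] at this
    · rintro ⟨m, hm, rfl⟩
      have := smul_mem_cone' hm ht.le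
      have heq : t • (y - m • eLast n) = t • y - (t • m) • eLast n := by
        rw [smul_sub, smul_smul, smul_eq_mul]
      rwa [heq] at this
  unfold eps
  rw [hset, Real.sSup_smul_of_nonneg ht.le, smul_sub, smul_eq_mul, mul_smul]

lemma smul_mem_lenv' {J : Set (Fin n → ℝ)} {x : Fin (n + 1) → ℝ} (hx : x ∈ lenv J)
    {t : ℝ} (ht : 0 < t) : t • x ∈ lenv J := by
  obtain ⟨y, hy, rfl⟩ := hx
  exact ⟨t • y, smul_mem_cone' hy ht.le, eps_smul' y ht⟩

lemma aux_dir (J : Set (Fin n → ℝ)) (rho : ℚ)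
    (h : (latt ((fun x => x + (rho : ℝ) • eLast n) '' lenv J)).Nonempty) :
    (latt ((fun x => x - (rho : ℝ) • eLast n) '' lenv J)).Nonempty := by
  obtain ⟨w, ⟨x, hx, rfl⟩, hlat⟩ := h
  set k : ℝ := 2 * (rho.den : ℝ) - 1 with hk
  have hden1 : (1 : ℝ) ≤ (rho.den : ℝ) := by exact_mod_cast rho.pos
  have hkpos : 0 < k := by simp only [hk]; linarith
  have hnum : (rho.den : ℝ) * (rho : ℝ) = (rho.num : ℝ) := by
    have : (rho.den : ℚ) * rho = (rho.num : ℚ) := by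
      rw [mul_comm]
      exact_mod_cast Rat.mul_den_eq_num rho
    exact_mod_cast this
  refine ⟨k • x - (rho : ℝ) • eLast n, ⟨k • x, smul_mem_lenv' hx hkpos, rfl⟩, ?_⟩
  intro i
  obtain ⟨z, hz⟩ := hlat i
  simp only [Pi.add_apply, Pi.smul_apply, smul_eq_mul] at hz
  simp only [Pi.sub_apply, Pi.smul_apply, smul_eq_mul]
  by_cases hi : i = Fin.last n
  · subst hi
    have he : eLast n (Fin.last n) = 1 := Pi.single_eq_same _ _
    rw [he] at hz ⊢
    refine ⟨(2 * (rho.den : ℤ) - 1) * z - 2 * rho.num, ?_⟩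
    push_cast
    rw [hk]
    nlinarith [hnum, hz]
  · have he : eLast n i = 0 := Pi.single_eq_of_ne hi _
    rw [he] at hz ⊢
    refine ⟨(2 * (rho.den : ℤ) - 1) * z, ?_⟩
    push_cast
    rw [hk]
    nlinarith [hz]

/-- Lemma 4.4 (symmetry of lattice points on shifted lower envelopes). -/
theorem shifted_lenv_lattice_symm {n : ℕ} (hn : 1 ≤ n) (J : Set (Fin n → ℝ))
    (hJconv : Convex ℝ J) (hJcpt : IsCompact J) (rho : ℚ) :
    (latt ((fun x => x + (rho : ℝ) • eLast n) '' lenv J)).Nonempty ↔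
      (latt ((fun x => x - (rho : ℝ) • eLast n) '' lenv J)).Nonempty := by
  constructor
  · exact aux_dir J rho
  · intro h
    have h1 : (fun x : Fin (n + 1) → ℝ => x - (rho : ℝ) • eLast n)
        = fun x => x + ((-rho : ℚ) : ℝ) • eLast n := by
      funext x; push_cast; rw [neg_smul, sub_eq_add_neg]
    have h2 : (fun x : Fin (n + 1) → ℝ => x - ((-rho : ℚ) : ℝ) • eLast n)
        = fun x => x + (rho : ℝ) • eLast n := by
      funext x; push_cast; rw [neg_smul, sub_neg_eq_add]
    have := aux_dir J (-rho) (by rwa [← h1])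
    rwa [h2] at this

end ArxivFreeSum
end
end

section
/- Let Q ⊂ ℝ^n be a rational polytope and let ρ be a real number. If (lenv(cone Q) + ρe_{n+1}) ∩ ℤ^{n+1} ≠ ∅, then ρ is a rational number. -/
open Set Pointwise
open scoped Classical

noncomputable section

namespace ArxivFreeSum

variable {n : ℕ}

/-- A rational linear system with a real solution has a rational solution. -/
theorem ratSys {ι κ : Type*} [Fintype ι] [Fintype κ] [DecidableEq κ]
    (vq : ι → κ → ℚ) (wq : κ → ℚ) (c : ι → ℝ)
    (h : ∀ i, (wq i : ℝ) = ∑ j, c j * (vq j i : ℝ)) :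
    ∃ cq : ι → ℚ, ∀ i, wq i = ∑ j, cq j * vq j i := by
  classical
  let φ : (ι → ℚ) →ₗ[ℚ] (κ → ℚ) :=
    { toFun := fun d => fun i => ∑ j, d j * vq j i
      map_add' := by intro a b; funext i; simp [add_mul, Finset.sum_add_distrib]
      map_smul' := by intro r a; funext i; simp [Finset.mul_sum, mul_assoc] }
  by_contra hno
  push_neg at hno
  have hwnot : wq ∉ LinearMap.range φ := by
    rintro ⟨cq, hcq⟩
    obtain ⟨i, hi⟩ := hno cq
    exact hi (congrFun hcq i).symm
  obtain ⟨f, hf0, hfbot⟩ := (LinearMap.range φ).exists_dual_map_eq_bot_of_notMem hwnot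
    (Module.Projective.of_free (R := ℚ))
  set r : κ → ℚ := fun i => f (fun j => if i = j then 1 else 0) with hr
  have hfev : ∀ y : κ → ℚ, f y = ∑ i, y i * r i := by
    intro y
    conv_lhs => rw [pi_eq_sum_univ y]
    rw [map_sum]
    refine Finset.sum_congr rfl fun i _ => ?_
    rw [map_smul, smul_eq_mul]
  have hker : ∀ u ∈ LinearMap.range φ, f u = 0 := by
    intro u hu
    have : f u ∈ (LinearMap.range φ).map f := Submodule.mem_map_of_mem hu
    rwa [hfbot, Submodule.mem_bot] at this
  have hvq : ∀ j, f (vq j) = 0 := by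
    intro j
    refine hker _ ⟨fun j' => if j' = j then 1 else 0, ?_⟩
    funext i
    simp [φ]
  have hcast : ((f wq : ℚ) : ℝ) = 0 := by
    have : (f wq : ℚ) = ∑ i, wq i * r i := hfev wq
    rw [this]
    push_cast
    calc ∑ i, (wq i : ℝ) * (r i : ℝ)
        = ∑ i, (∑ j, c j * (vq j i : ℝ)) * (r i : ℝ) := by
          refine Finset.sum_congr rfl fun i _ => ?_; rw [h i]
      _ = ∑ j, c j * ∑ i, (vq j i : ℝ) * (r i : ℝ) := by
          simp_rw [Finset.sum_mul, Finset.mul_sum]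
          rw [Finset.sum_comm]
          apply Finset.sum_congr rfl fun j _ => Finset.sum_congr rfl fun i _ => by ring
      _ = 0 := by
          refine Finset.sum_eq_zero fun j _ => ?_
          have : ((f (vq j) : ℚ) : ℝ) = ∑ i, (vq j i : ℝ) * (r i : ℝ) := by
            rw [hfev (vq j)]; push_cast; rfl
          rw [← this, hvq j]; simp
  rw [Rat.cast_eq_zero] at hcast
  exact hf0 hcast

/-- Membership in the cone over a finite convex hull, in coordinates. -/
theorem mem_cone_iff_s16 {n : ℕ} (V : Finset (Fin n → ℝ)) (hV : V.Nonempty)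
    (x : Fin (n + 1) → ℝ) :
    x ∈ cone (convexHull ℝ (V : Set (Fin n → ℝ))) ↔
      ∃ c : ↥V → ℝ, (∀ j, 0 ≤ c j) ∧
        (∀ i : Fin n, x (Fin.castSucc i) = ∑ j, c j * (j : Fin n → ℝ) i) ∧
        x (Fin.last n) = ∑ j, c j := by
  classical
  constructor
  · rintro ⟨l, a, ha, hl, rfl⟩
    rw [Finset.convexHull_eq] at ha
    obtain ⟨w, hw0, hw1, hwa⟩ := ha
    rw [Finset.centerMass_eq_of_sum_1 _ _ hw1] at hwa
    refine ⟨fun j => l * w j, fun j => mul_nonneg hl (hw0 j j.2), ?_, ?_⟩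
    · intro i
      have ha_i : a i = ∑ j : ↥V, w j * (j : Fin n → ℝ) i := by
        rw [← hwa]
        rw [← Finset.sum_coe_sort V (fun v => w v • id v)]
        simp [Finset.sum_apply]
      simp only [Pi.smul_apply, smul_eq_mul, emb, Fin.snoc_castSucc]
      rw [ha_i, Finset.mul_sum]
      exact Finset.sum_congr rfl fun j _ => by ring
    · have hl1 : ∑ j : ↥V, w (j : Fin n → ℝ) = 1 := by
        rw [Finset.sum_coe_sort V w]; exact hw1
      simp only [Pi.smul_apply, smul_eq_mul, emb, Fin.snoc_last]
      rw [← Finset.mul_sum, hl1, mul_one]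
  · rintro ⟨c, hc0, hcoord, hlast⟩
    set l : ℝ := ∑ j : ↥V, c j with hl
    have hl0 : 0 ≤ l := Finset.sum_nonneg fun j _ => hc0 j
    rcases eq_or_lt_of_le hl0 with hzero | hpos
    · have hcz : ∀ j : ↥V, c j = 0 := by
        intro j
        have := (Finset.sum_eq_zero_iff_of_nonneg (fun j _ => hc0 j)).mp hzero.symm
        exact this j (Finset.mem_univ j)
      obtain ⟨v₀, hv₀⟩ := hV
      refine ⟨0, v₀, subset_convexHull ℝ _ hv₀, le_refl 0, ?_⟩
      funext k
      induction k using Fin.lastCases with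
      | last =>
          have hx0 : x (Fin.last n) = 0 := by
            rw [hlast]; exact Finset.sum_eq_zero fun j _ => hcz j
          simp [hx0]
      | cast i =>
          have hx0 : x (Fin.castSucc i) = 0 := by
            rw [hcoord i]; exact Finset.sum_eq_zero fun j _ => by rw [hcz]; ring
          simp [hx0]
    · set a : Fin n → ℝ := l⁻¹ • ∑ j : ↥V, c j • (j : Fin n → ℝ) with ha
      have haQ : a ∈ convexHull ℝ (V : Set (Fin n → ℝ)) := by
        have := Finset.centerMass_mem_convexHull (Finset.univ : Finset ↥V)
          (w := c) (fun j _ => hc0 j) (lt_of_lt_of_eq hpos hl)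
          (z := fun j => (j : Fin n → ℝ)) (fun j _ => j.2)
        rw [ha, hl]; exact this
      refine ⟨l, a, haQ, hl0, ?_⟩
      funext k
      induction k using Fin.lastCases with
      | last =>
          simp only [Pi.smul_apply, smul_eq_mul, emb, Fin.snoc_last, hlast, mul_one]
      | cast i =>
          have hai : a i = l⁻¹ * ∑ j : ↥V, c j * (j : Fin n → ℝ) i := by
            simp [ha, Finset.sum_apply]
          simp only [Pi.smul_apply, smul_eq_mul, emb, Fin.snoc_castSucc]
          rw [hai, hcoord i, ← mul_assoc, mul_inv_cancel₀ (ne_of_gt hpos), one_mul]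


/-- Lemma 4.5 (shifted lower envelopes containing lattice points have
rational shifts). -/
theorem rational_shift_of_lattice_point {n : ℕ} (hn : 1 ≤ n) (Q : Set (Fin n → ℝ))
    (hQ : IsRatPolytope Q) (rho : ℝ)
    (hne : (latt ((fun x => x + rho • eLast n) '' lenv Q)).Nonempty) :
    ∃ q : ℚ, rho = (q : ℝ) := by
  classical
  obtain ⟨V, hVrat, rfl⟩ := hQ
  obtain ⟨y, hyim, hylat⟩ := hne
  obtain ⟨z, hz, rfl⟩ := hyim
  obtain ⟨x, hx, rfl⟩ := hz
  set Qs : Set (Fin n → ℝ) := convexHull ℝ (V : Set (Fin n → ℝ)) with hQs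
  have hVne : V.Nonempty := by
    obtain ⟨l, a, ha, -, -⟩ := hx
    rcases V.eq_empty_or_nonempty with h | h
    · rw [hQs, h] at ha; simp at ha
    · exact h
  haveI : Nonempty ↥V := ⟨⟨hVne.choose, hVne.choose_spec⟩⟩
  set SS : Set ℝ := {l : ℝ | x - l • eLast n ∈ cone Qs} with hSS
  have heps : eps Qs x = x - sSup SS • eLast n := rfl
  have hel : ∀ i : Fin n, eLast n (Fin.castSucc i) = 0 := fun i =>
    Pi.single_eq_of_ne (Fin.castSucc_lt_last i).ne 1
  have hell : eLast n (Fin.last n) = 1 := Pi.single_eq_same _ _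
  -- lattice coordinates
  have hwint : ∀ i : Fin n, ∃ zz : ℤ, x (Fin.castSucc i) = (zz : ℝ) := by
    intro i
    obtain ⟨zz, hzz⟩ := hylat (Fin.castSucc i)
    refine ⟨zz, ?_⟩
    rw [← hzz, heps]
    simp [hel i]
  obtain ⟨zl, hzl⟩ := hylat (Fin.last n)
  have hzl' : x (Fin.last n) - sSup SS + rho = (zl : ℝ) := by
    rw [← hzl, heps]
    simp [hell]
  -- the feasible set and objective
  set F : Set (↥V → ℝ) := {c | (∀ j, 0 ≤ c j) ∧
      ∀ i : Fin n, x (Fin.castSucc i) = ∑ j, c j * (j : Fin n → ℝ) i} with hF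
  set O : (↥V → ℝ) → ℝ := fun c => ∑ j, c j with hO
  obtain ⟨c₀, hc₀0, hc₀coord, hc₀last⟩ := (mem_cone_iff_s16 V hVne x).mp hx
  have hc₀F : c₀ ∈ F := ⟨hc₀0, hc₀coord⟩
  have hOcont : Continuous O := continuous_finset_sum _ fun j _ => continuous_apply j
  have hFclosed : IsClosed F := by
    have h1 : IsClosed {c : ↥V → ℝ | ∀ j, 0 ≤ c j} := by
      have he : {c : ↥V → ℝ | ∀ j, 0 ≤ c j} = ⋂ j, {c | 0 ≤ c j} := by ext c; simp
      rw [he]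
      exact isClosed_iInter fun j => isClosed_le continuous_const (continuous_apply j)
    have h2 : IsClosed {c : ↥V → ℝ |
        ∀ i : Fin n, x (Fin.castSucc i) = ∑ j, c j * (j : Fin n → ℝ) i} := by
      have he : {c : ↥V → ℝ | ∀ i : Fin n, x (Fin.castSucc i) = ∑ j, c j * (j : Fin n → ℝ) i}
          = ⋂ i, {c : ↥V → ℝ | x (Fin.castSucc i) = ∑ j, c j * (j : Fin n → ℝ) i} := by ext c; simp
      rw [he]
      exact isClosed_iInter fun i => isClosed_eq continuous_const
        (continuous_finset_sum _ fun j _ => (continuous_apply j).mul continuous_const)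
    have he : F = {c : ↥V → ℝ | ∀ j, 0 ≤ c j} ∩ {c : ↥V → ℝ |
        ∀ i : Fin n, x (Fin.castSucc i) = ∑ j, c j * (j : Fin n → ℝ) i} := by
      rw [hF]; ext c; simp [Set.mem_setOf_eq, Set.mem_inter_iff]
    rw [he]; exact h1.inter h2
  set K : Set (↥V → ℝ) := {c | c ∈ F ∧ O c ≤ O c₀} with hK
  have hKsub : K ⊆ Set.pi Set.univ (fun _ : ↥V => Set.Icc (0:ℝ) (O c₀)) := by
    rintro c ⟨⟨hc0, -⟩, hcO⟩ j -
    exact ⟨hc0 j, le_trans (Finset.single_le_sum (fun j _ => hc0 j) (Finset.mem_univ j)) hcO⟩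
  have hKclosed : IsClosed K := by
    have he : K = F ∩ {c | O c ≤ O c₀} := by rw [hK]; rfl
    rw [he]; exact hFclosed.inter (isClosed_le hOcont continuous_const)
  have hKcpt : IsCompact K :=
    (isCompact_univ_pi fun _ => isCompact_Icc).of_isClosed_subset hKclosed hKsub
  obtain ⟨cs, hcsK, hcsmin⟩ := hKcpt.exists_isMinOn ⟨c₀, hc₀F, le_refl _⟩ hOcont.continuousOn
  have hcsF : cs ∈ F := hcsK.1
  have hmin : ∀ c ∈ F, O cs ≤ O c := by
    intro c hc
    by_cases h : O c ≤ O c₀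
    · exact isMinOn_iff.mp hcsmin c ⟨hc, h⟩
    · exact le_trans (isMinOn_iff.mp hcsmin c₀ ⟨hc₀F, le_refl _⟩) (le_of_not_ge h)
  -- identify the sSup
  have hub : ∀ l ∈ SS, l ≤ x (Fin.last n) - O cs := by
    intro l hl
    obtain ⟨c, hc0, hccoord, hclast⟩ := (mem_cone_iff_s16 V hVne _).mp hl
    have hcF : c ∈ F := by
      refine ⟨hc0, fun i => ?_⟩
      have h1 := hccoord i
      simpa [hel i] using h1
    have hOc : x (Fin.last n) - l = O c := by
      have h2 := hclast
      simpa [hell, hO] using h2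
    have h3 := hmin c hcF
    linarith
  have hmem : x (Fin.last n) - O cs ∈ SS := by
    refine (mem_cone_iff_s16 V hVne _).mpr ⟨cs, hcsF.1, fun i => ?_, ?_⟩
    · simpa [hel i] using hcsF.2 i
    · simp [hell, hO, Finset.univ_eq_attach]
  have hSeq : sSup SS = x (Fin.last n) - O cs := by
    apply le_antisymm
    · refine csSup_le ⟨0, ?_⟩ hub
      show x - (0:ℝ) • eLast n ∈ cone Qs
      simpa using hx
    · exact le_csSup ⟨_, hub⟩ hmem
  -- rational data
  have hwq : ∀ i : Fin n, ∃ q : ℚ, x (Fin.castSucc i) = (q : ℝ) := by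
    intro i
    obtain ⟨zz, hzz⟩ := hwint i
    exact ⟨(zz : ℚ), by rw [hzz]; push_cast; ring⟩
  choose wq hwqs using hwq
  have hvq' : ∀ j : ↥V, ∀ i, ∃ q : ℚ, (j : Fin n → ℝ) i = (q : ℝ) := fun j i => hVrat j j.2 i
  choose vq hvqs using hvq'
  -- direction lemma
  have hdir : ∀ d : ↥V → ℝ, (∀ j, cs j = 0 → d j = 0) →
      (∀ i : Fin n, ∑ j, d j * (j : Fin n → ℝ) i = 0) → ∑ j, d j = 0 := by
    intro d hsupp hcomb
    obtain ⟨ε, hε0, hεb⟩ : ∃ ε : ℝ, 0 < ε ∧ ∀ j, ε * |d j| ≤ cs j := by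
      refine ⟨Finset.univ.inf' Finset.univ_nonempty
        (fun j => if d j = 0 then 1 else cs j / |d j|), ?_, ?_⟩
      · rw [Finset.lt_inf'_iff]
        intro j _
        by_cases h : d j = 0
        · simp [h]
        · simp only [h, if_false]
          have hcs : 0 < cs j := lt_of_le_of_ne (hcsF.1 j) (fun he => h (hsupp j he.symm))
          exact div_pos hcs (abs_pos.mpr h)
      · intro j
        by_cases h : d j = 0
        · simp [h, hcsF.1 j]
        · have h1 : Finset.univ.inf' Finset.univ_nonempty
              (fun j => if d j = 0 then 1 else cs j / |d j|) ≤ cs j / |d j| := by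
            have h2 := Finset.inf'_le (fun j => if d j = 0 then (1:ℝ) else cs j / |d j|)
              (Finset.mem_univ j)
            simpa [h] using h2
          calc _ ≤ (cs j / |d j|) * |d j| := mul_le_mul_of_nonneg_right h1 (abs_nonneg _)
            _ = cs j := div_mul_cancel₀ _ (ne_of_gt (abs_pos.mpr h))
    have key : ∀ t : ℝ, |t| ≤ ε → 0 ≤ t * ∑ j, d j := by
      intro t ht
      have hmemF : (fun j => cs j + t * d j) ∈ F := by
        refine ⟨fun j => ?_, fun i => ?_⟩
        · have h1 : |t * d j| ≤ cs j := by
            rw [abs_mul]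
            calc |t| * |d j| ≤ ε * |d j| := mul_le_mul_of_nonneg_right ht (abs_nonneg _)
              _ ≤ cs j := hεb j
          have h2 := neg_abs_le (t * d j)
          show (0:ℝ) ≤ cs j + t * d j
          linarith
        · have hsplit : ∑ j, (cs j + t * d j) * (j : Fin n → ℝ) i
              = (∑ j, cs j * (j : Fin n → ℝ) i) + t * ∑ j, d j * (j : Fin n → ℝ) i := by
            rw [Finset.mul_sum, ← Finset.sum_add_distrib]
            exact Finset.sum_congr rfl fun j _ => by ring
          rw [hsplit, hcomb i, mul_zero, add_zero]
          exact hcsF.2 i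
      have hOc : O (fun j => cs j + t * d j) = O cs + t * ∑ j, d j := by
        rw [hO]
        simp only []
        rw [Finset.mul_sum, ← Finset.sum_add_distrib]
      have h3 := hmin _ hmemF
      rw [hOc] at h3
      linarith
    have h1 := key ε (le_of_eq (abs_of_pos hε0))
    have h2 := key (-ε) (by rw [abs_neg]; exact le_of_eq (abs_of_pos hε0))
    have h4 : ε * ∑ j, d j = 0 := by nlinarith
    rcases mul_eq_zero.mp h4 with h | h
    · exact absurd h (ne_of_gt hε0)
    · exact h
  -- rational solution via ratSys
  set A : ↥V → (Fin n ⊕ ↥V) → ℚ := fun j => Sum.elim (fun i => vq j i)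
      (fun j' => if 0 < cs j' then 0 else if j = j' then 1 else 0) with hA
  set b : (Fin n ⊕ ↥V) → ℚ := Sum.elim wq (fun _ => 0) with hb
  have hreal : ∀ k, (b k : ℝ) = ∑ j, cs j * (A j k : ℝ) := by
    rintro (i | j')
    · simp only [hb, hA, Sum.elim_inl]
      rw [← hwqs i, hcsF.2 i]
      exact Finset.sum_congr rfl fun j _ => by rw [hvqs j i]
    · simp only [hb, hA, Sum.elim_inr, Rat.cast_zero]
      by_cases h : 0 < cs j'
      · symm
        refine Finset.sum_eq_zero fun j _ => ?_
        simp [h]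
      · have hcs0 : cs j' = 0 := le_antisymm (not_lt.mp h) (hcsF.1 j')
        have hterm : ∀ j : ↥V, cs j *
            ((if 0 < cs j' then (0:ℚ) else if j = j' then 1 else 0 : ℚ) : ℝ)
            = if j = j' then cs j else 0 := by
          intro j; by_cases hj : j = j' <;> simp [h, hj]
        rw [Finset.sum_congr rfl (fun j _ => hterm j), Finset.sum_ite_eq' Finset.univ j' cs]
        simp [hcs0]
  obtain ⟨cq, hcq⟩ := ratSys A b cs hreal
  have hcq0 : ∀ j', ¬ 0 < cs j' → cq j' = 0 := by
    intro j' h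
    have hthis := (hcq (Sum.inr j')).symm
    simp only [hb, hA, Sum.elim_inr] at hthis
    have hterm : ∀ j : ↥V, cq j * (if 0 < cs j' then (0:ℚ) else if j = j' then 1 else 0)
        = if j = j' then cq j else 0 := by
      intro j; by_cases hj : j = j' <;> simp [h, hj]
    rw [Finset.sum_congr rfl (fun j _ => hterm j), Finset.sum_ite_eq' Finset.univ j' cq] at hthis
    simpa using hthis
  have hcomb0 : ∀ i : Fin n, ∑ j, ((cq j : ℝ) - cs j) * (j : Fin n → ℝ) i = 0 := by
    intro i
    have h1 : (wq i : ℝ) = ∑ j, (cq j : ℝ) * (j : Fin n → ℝ) i := by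
      have h2 := hcq (Sum.inl i)
      simp only [hb, hA, Sum.elim_inl] at h2
      have h3 : ((wq i : ℚ) : ℝ) = ((∑ j, cq j * vq j i : ℚ) : ℝ) := by rw [h2]
      rw [h3]
      push_cast
      exact Finset.sum_congr rfl fun j _ => by rw [hvqs j i]
    have h2 : (wq i : ℝ) = ∑ j, cs j * (j : Fin n → ℝ) i := by
      rw [← hwqs i]; exact hcsF.2 i
    rw [Finset.sum_congr rfl (fun j _ => sub_mul (cq j : ℝ) (cs j) _), Finset.sum_sub_distrib,
      ← h1, ← h2, sub_self]
  have hsum0 : ∑ j, ((cq j : ℝ) - cs j) = 0 := by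
    refine hdir _ (fun j hj => ?_) hcomb0
    have : cq j = 0 := hcq0 j (by rw [hj]; exact lt_irrefl 0)
    simp [this, hj]
  have hOcs : O cs = ((∑ j, cq j : ℚ) : ℝ) := by
    rw [Finset.sum_sub_distrib] at hsum0
    rw [hO]
    push_cast
    linarith
  refine ⟨(zl : ℚ) - ∑ j, cq j, ?_⟩
  have hrho : rho = (zl : ℝ) - O cs := by
    rw [hSeq] at hzl'
    linarith
  rw [hrho, hOcs]
  push_cast
  ring


end ArxivFreeSum
end
end

section
/- Let J, K ⊂ ℝ^n be convex sets such that J is compact and J ⊕ K is an affine free sum with common point p ∈ ℚ^n. Then (cone(J ⊕ K))_ℤ is the disjoint union over x ∈ pllenv(cone J) of the sets (x + cone K)_ℤ; that is, a lattice point w ∈ ℤ^{n+1} lies in cone(J ⊕ K) if and only if there exists a unique x ∈ pllenv(cone J) with w − x ∈ cone K. -/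
open Set Pointwise
open scoped Classical

noncomputable section

namespace ArxivFreeSum

variable {n : ℕ}

lemma emb_castSucc (a : Fin n → ℝ) (i : Fin n) : emb a i.castSucc = a i := by
  simp [emb]

lemma emb_last (a : Fin n → ℝ) : emb a (Fin.last n) = 1 := by
  simp [emb]

lemma smul_emb_mem_cone {J : Set (Fin n → ℝ)} {a : Fin n → ℝ} {l : ℝ}
    (ha : a ∈ J) (hl : 0 ≤ l) : l • emb a ∈ cone J := ⟨l, a, ha, hl, rfl⟩

lemma cone_smul {J : Set (Fin n → ℝ)} {x : Fin (n+1) → ℝ} {u : ℝ}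
    (hu : 0 ≤ u) (hx : x ∈ cone J) : u • x ∈ cone J := by
  obtain ⟨l, a, ha, hl, rfl⟩ := hx
  exact ⟨u * l, a, ha, mul_nonneg hu hl, by rw [smul_smul]⟩

lemma emb_combo {a b : Fin n → ℝ} {u v : ℝ} (huv : u + v = 1) :
    emb (u • a + v • b) = u • emb a + v • emb b := by
  funext i
  refine Fin.lastCases ?_ (fun j => ?_) i
  · simp [emb_last]; linarith
  · simp [emb_castSucc]

lemma cone_add {J : Set (Fin n → ℝ)} (hJ : Convex ℝ J) {x y : Fin (n+1) → ℝ}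
    (hx : x ∈ cone J) (hy : y ∈ cone J) : x + y ∈ cone J := by
  obtain ⟨l, a, ha, hl, rfl⟩ := hx
  obtain ⟨m, b, hb, hm, rfl⟩ := hy
  rcases eq_or_lt_of_le (add_nonneg hl hm) with h0 | hpos
  · have hl0 : l = 0 := by linarith
    have hm0 : m = 0 := by linarith
    subst hl0; subst hm0
    exact ⟨0, a, ha, le_refl 0, by simp⟩
  · have ht : l + m ≠ 0 := ne_of_gt hpos
    have hcomb : (l / (l+m)) • a + (m / (l+m)) • b ∈ J :=
      hJ ha hb (by positivity) (by positivity) (by rw [← add_div, div_self ht])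
    refine ⟨l + m, _, hcomb, hpos.le, ?_⟩
    rw [emb_combo (by field_simp), smul_add, smul_smul, smul_smul]
    field_simp

lemma last_of_cone {J : Set (Fin n → ℝ)} {x : Fin (n+1) → ℝ}
    (hx : x ∈ cone J) : 0 ≤ x (Fin.last n) := by
  obtain ⟨l, a, ha, hl, rfl⟩ := hx
  simpa [emb_last] using hl

lemma bddAbove_S {J : Set (Fin n → ℝ)} (p : Fin n → ℝ) (x : Fin (n+1) → ℝ) :
    BddAbove {l : ℝ | x - l • emb p ∈ cone J} := by
  refine ⟨x (Fin.last n), fun l hl => ?_⟩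
  have h := last_of_cone hl
  simp only [Pi.sub_apply, Pi.smul_apply, emb_last, smul_eq_mul, mul_one] at h
  linarith

lemma cone_isClosed {J : Set (Fin n → ℝ)} (hJ : IsCompact J) : IsClosed (cone J) := by
  refine isClosed_of_closure_subset fun v hv => ?_
  set c := v (Fin.last n) + 1 with hc
  have hUopen : IsOpen {w : Fin (n+1) → ℝ | w (Fin.last n) < c} :=
    isOpen_lt (continuous_apply _) continuous_const
  have h1 : v ∈ closure ({w : Fin (n+1) → ℝ | w (Fin.last n) < c} ∩ cone J) :=
    hUopen.inter_closure ⟨by simp [hc], hv⟩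
  have hcont : Continuous (fun q : ℝ × (Fin n → ℝ) => q.1 • emb q.2) := by
    apply continuous_pi; intro i
    refine Fin.lastCases ?_ (fun j => ?_) i
    · simp only [Pi.smul_apply, emb_last, smul_eq_mul, mul_one]
      exact continuous_fst
    · simp only [Pi.smul_apply, emb_castSucc, smul_eq_mul]
      exact continuous_fst.mul ((continuous_apply j).comp continuous_snd)
  have hcpt : IsCompact ((fun q : ℝ × (Fin n → ℝ) => q.1 • emb q.2) '' (Set.Icc 0 c ×ˢ J)) :=
    ((isCompact_Icc).prod hJ).image hcont
  have himg : {w : Fin (n+1) → ℝ | w (Fin.last n) < c} ∩ cone J ⊆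
      (fun q : ℝ × (Fin n → ℝ) => q.1 • emb q.2) '' (Set.Icc 0 c ×ˢ J) := by
    rintro w ⟨hwc, l, a, ha, hl, rfl⟩
    have hlast : (l • emb a) (Fin.last n) = l := by
      simp [emb_last]
    refine ⟨(l, a), ⟨⟨hl, ?_⟩, ha⟩, rfl⟩
    rw [Set.mem_setOf_eq, hlast] at hwc
    exact hwc.le
  have h2 := closure_mono himg h1
  rw [hcpt.isClosed.closure_eq] at h2
  obtain ⟨⟨l, a⟩, ⟨⟨hl0, _⟩, ha⟩, rfl⟩ := h2
  exact ⟨l, a, ha, hl0, rfl⟩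

lemma S_isClosed {J : Set (Fin n → ℝ)} (hJ : IsCompact J) (p : Fin n → ℝ)
    (x : Fin (n+1) → ℝ) : IsClosed {l : ℝ | x - l • emb p ∈ cone J} := by
  have : Continuous (fun l : ℝ => x - l • emb p) :=
    continuous_const.sub (continuous_id.smul continuous_const)
  exact (cone_isClosed hJ).preimage this

lemma epsP_spec {J : Set (Fin n → ℝ)} (hJ : IsCompact J) {p : Fin n → ℝ}
    {y : Fin (n+1) → ℝ} (hy : y ∈ cone J) :
    epsP p J y ∈ cone J ∧ ∀ l : ℝ, epsP p J y - l • emb p ∈ cone J → l ≤ 0 := by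
  set S := {l : ℝ | y - l • emb p ∈ cone J} with hS
  have hne : S.Nonempty := ⟨0, by rw [hS, Set.mem_setOf_eq, zero_smul, sub_zero]; exact hy⟩
  have hbd : BddAbove S := bddAbove_S p y
  have hmem : sSup S ∈ S := (S_isClosed hJ p y).csSup_mem hne hbd
  have heps : epsP p J y = y - sSup S • emb p := rfl
  constructor
  · rw [heps]; exact hmem
  · intro l hl
    have hrw : y - (sSup S + l) • emb p = epsP p J y - l • emb p := by
      rw [heps, add_smul]; abel
    have hin : sSup S + l ∈ S := by rw [hS, Set.mem_setOf_eq, hrw]; exact hl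
    have := le_csSup hbd hin
    linarith

def projp (p : Fin n → ℝ) (v : Fin (n+1) → ℝ) : Fin n → ℝ :=
  fun j => v j.castSucc - v (Fin.last n) * p j

lemma projp_sub (p : Fin n → ℝ) (v w : Fin (n+1) → ℝ) :
    projp p (v - w) = projp p v - projp p w := by
  funext j; simp [projp]; ring

lemma projp_add (p : Fin n → ℝ) (v w : Fin (n+1) → ℝ) :
    projp p (v + w) = projp p v + projp p w := by
  funext j; simp [projp]; ring

lemma projp_mem_span {J : Set (Fin n → ℝ)} {p : Fin n → ℝ} {v : Fin (n+1) → ℝ}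
    (hv : v ∈ cone J) : projp p v ∈ Submodule.span ℝ ((fun x => x - p) '' J) := by
  obtain ⟨l, a, ha, hl, rfl⟩ := hv
  have : projp p (l • emb a) = l • (a - p) := by
    funext j; simp [projp, emb_castSucc, emb_last]; ring
  rw [this]
  exact Submodule.smul_mem _ _ (Submodule.subset_span ⟨a, ha, rfl⟩)

lemma eq_smul_emb_of_projp_eq_zero {p : Fin n → ℝ} {v : Fin (n+1) → ℝ}
    (h : projp p v = 0) : v = v (Fin.last n) • emb p := by
  funext i
  refine Fin.lastCases ?_ (fun j => ?_) i
  · simp [emb_last]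
  · have := congrFun h j
    simp only [projp, Pi.zero_apply] at this
    simp only [Pi.smul_apply, emb_castSucc, smul_eq_mul]
    linarith

lemma span_inter_eq_zero {J K : Set (Fin n → ℝ)} {p : Fin n → ℝ}
    (hpJ : p ∈ J) (hpK : p ∈ K)
    (hint : (affineSpan ℝ J : Set (Fin n → ℝ)) ∩ (affineSpan ℝ K : Set (Fin n → ℝ)) = {p})
    {d : Fin n → ℝ}
    (hdJ : d ∈ Submodule.span ℝ ((fun x => x - p) '' J))
    (hdK : d ∈ Submodule.span ℝ ((fun x => x - p) '' K)) : d = 0 := by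
  have key : ∀ (S : Set (Fin n → ℝ)), p ∈ S →
      d ∈ Submodule.span ℝ ((fun x => x - p) '' S) → d + p ∈ affineSpan ℝ S := by
    intro S hpS hd
    have hle : Submodule.span ℝ ((fun x => x - p) '' S) ≤ vectorSpan ℝ S := by
      rw [vectorSpan_def]
      apply Submodule.span_mono
      rintro _ ⟨a, ha, rfl⟩
      exact Set.vsub_mem_vsub ha hpS
    have hdir : d ∈ (affineSpan ℝ S).direction := by
      rw [direction_affineSpan]; exact hle hd
    have := AffineSubspace.vadd_mem_of_mem_direction hdir (subset_affineSpan ℝ S hpS)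
    simpa using this
  have hmem : d + p ∈ ({p} : Set (Fin n → ℝ)) := by
    rw [← hint]; exact ⟨key J hpJ hdJ, key K hpK hdK⟩
  have : d + p = p := hmem
  simpa using congrArg (fun x => x - p) this

lemma exists_den {p : Fin n → ℝ} (hp : IsRatPt p) :
    ∃ r : ℕ, 0 < r ∧ ∀ i, ∃ z : ℤ, (r : ℝ) * p i = (z : ℝ) := by
  choose q hq using hp
  refine ⟨∏ i, (q i).den, Finset.prod_pos (fun i _ => (q i).pos), fun i => ?_⟩
  obtain ⟨k, hk⟩ := Finset.dvd_prod_of_mem (fun i => (q i).den) (Finset.mem_univ i)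
  refine ⟨(k : ℤ) * (q i).num, ?_⟩
  rw [hq i, hk]
  have hden : ((q i).den : ℝ) ≠ 0 := Nat.cast_ne_zero.mpr (q i).den_nz
  rw [Rat.cast_def]
  push_cast
  field_simp

lemma cone_mono {S T : Set (Fin n → ℝ)} (h : S ⊆ T) : cone S ⊆ cone T := by
  rintro x ⟨l, a, ha, hl, rfl⟩
  exact ⟨l, a, h ha, hl, rfl⟩

lemma mem_cone_sum {J K : Set (Fin n → ℝ)} {p : Fin n → ℝ} (hJ : Convex ℝ J) (hK : Convex ℝ K)
    (hpJ : p ∈ J) (hpK : p ∈ K) {w : Fin (n+1) → ℝ} :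
    w ∈ cone (convexHull ℝ (J ∪ K)) ↔ ∃ y ∈ cone J, ∃ z ∈ cone K, w = y + z := by
  constructor
  · rintro ⟨l, c, hc, hl, rfl⟩
    set D := {c : Fin n → ℝ | ∃ y ∈ cone J, ∃ z ∈ cone K, emb c = y + z} with hD
    have hJD : J ⊆ D := by
      intro a ha
      refine ⟨emb a, ⟨1, a, ha, zero_le_one, (one_smul ℝ _).symm⟩,
        0, ⟨0, p, hpK, le_refl 0, (zero_smul ℝ _).symm⟩, (add_zero _).symm⟩
    have hKD : K ⊆ D := by
      intro a ha
      refine ⟨0, ⟨0, p, hpJ, le_refl 0, (zero_smul ℝ _).symm⟩,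
        emb a, ⟨1, a, ha, zero_le_one, (one_smul ℝ _).symm⟩, (zero_add _).symm⟩
    have hDconv : Convex ℝ D := by
      rintro c₁ ⟨y₁, hy₁, z₁, hz₁, he₁⟩ c₂ ⟨y₂, hy₂, z₂, hz₂, he₂⟩ u v hu hv huv
      refine ⟨u • y₁ + v • y₂, cone_add hJ (cone_smul hu hy₁) (cone_smul hv hy₂),
        u • z₁ + v • z₂, cone_add hK (cone_smul hu hz₁) (cone_smul hv hz₂), ?_⟩
      rw [emb_combo huv, he₁, he₂, smul_add, smul_add]
      abel
    have hcD : c ∈ D := convexHull_min (Set.union_subset hJD hKD) hDconv hc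
    obtain ⟨y, hy, z, hz, hce⟩ := hcD
    exact ⟨l • y, cone_smul hl hy, l • z, cone_smul hl hz, by rw [hce, smul_add]⟩
  · rintro ⟨y, hy, z, hz, rfl⟩
    exact cone_add (convex_convexHull ℝ _)
      (cone_mono ((Set.subset_union_left).trans (subset_convexHull ℝ _)) hy)
      (cone_mono ((Set.subset_union_right).trans (subset_convexHull ℝ _)) hz)

lemma pllenv_unique {J K : Set (Fin n → ℝ)} {p : Fin n → ℝ} (hJcpt : IsCompact J)
    (hpJ : p ∈ J) (hpK : p ∈ K)
    (hint : (affineSpan ℝ J : Set (Fin n → ℝ)) ∩ (affineSpan ℝ K : Set (Fin n → ℝ)) = {p})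
    {w x₁ x₂ : Fin (n+1) → ℝ}
    (hx₁ : x₁ ∈ pllenv p J) (hx₂ : x₂ ∈ pllenv p J)
    (h₁ : w - x₁ ∈ cone K) (h₂ : w - x₂ ∈ cone K) : x₁ = x₂ := by
  obtain ⟨y₁, ⟨hy₁c, -⟩, rfl⟩ := hx₁
  obtain ⟨y₂, ⟨hy₂c, -⟩, rfl⟩ := hx₂
  obtain ⟨hc₁, hmax₁⟩ := epsP_spec hJcpt hy₁c (p := p)
  obtain ⟨hc₂, hmax₂⟩ := epsP_spec hJcpt hy₂c (p := p)
  have hdJ : projp p (epsP p J y₁) - projp p (epsP p J y₂) ∈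
      Submodule.span ℝ ((fun x => x - p) '' J) :=
    sub_mem (projp_mem_span hc₁) (projp_mem_span hc₂)
  have heq : projp p (epsP p J y₁) - projp p (epsP p J y₂) =
      projp p (w - epsP p J y₂) - projp p (w - epsP p J y₁) := by
    rw [projp_sub, projp_sub]; abel
  have hdK : projp p (epsP p J y₁) - projp p (epsP p J y₂) ∈
      Submodule.span ℝ ((fun x => x - p) '' K) := by
    rw [heq]; exact sub_mem (projp_mem_span h₂) (projp_mem_span h₁)
  have h0 : projp p (epsP p J y₁ - epsP p J y₂) = 0 := by
    rw [projp_sub]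
    exact span_inter_eq_zero hpJ hpK hint hdJ hdK
  have hline := eq_smul_emb_of_projp_eq_zero h0
  set c := (epsP p J y₁ - epsP p J y₂) (Fin.last n) with hc
  have hsub : epsP p J y₁ - c • emb p = epsP p J y₂ := by
    have : epsP p J y₁ - epsP p J y₂ = c • emb p := hline
    rw [← this]; abel
  have hc_le : c ≤ 0 := hmax₁ c (by rw [hsub]; exact hc₂)
  have hc_ge : -c ≤ 0 := by
    refine hmax₂ (-c) ?_
    rw [← hsub]
    have : epsP p J y₁ - c • emb p - -c • emb p = epsP p J y₁ := by
      rw [neg_smul]; abel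
    rw [this]
    exact hc₁
  have hc0 : c = 0 := le_antisymm hc_le (by linarith)
  have := hsub
  rw [hc0, zero_smul, sub_zero] at this
  exact this

/-- Proposition 5.4 (disjoint decomposition of the lattice points of the
cone over an affine free sum). -/
theorem cone_affine_free_sum_lattice_decomposition {n : ℕ} (hn : 1 ≤ n)
    (J K : Set (Fin n → ℝ)) (p : Fin n → ℝ)
    (hJconv : Convex ℝ J) (hKconv : Convex ℝ K) (hJcpt : IsCompact J)
    (hfree : IsAffineFreeSum J K p) :
    ∀ w : Fin (n + 1) → ℤ,
      (fun i => (w i : ℝ)) ∈ cone (convexHull ℝ (J ∪ K)) ↔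
        ∃! x, x ∈ pllenv p J ∧ (fun i => (w i : ℝ)) - x ∈ cone K := by
  obtain ⟨hpQ, hpJ, hpK, hint, hdecomp⟩ := hfree
  obtain ⟨r, hr, hrp⟩ := exists_den hpQ
  intro w
  set wR : Fin (n + 1) → ℝ := fun i => (w i : ℝ) with hwR
  constructor
  · intro hw
    obtain ⟨y, hy, z, hz, hw_eq⟩ := (mem_cone_sum hJconv hKconv hpJ hpK).1 hw
    have hm_lam : InLambda p (projp p wR) := by
      refine ⟨fun j => w j.castSucc, -(w (Fin.last n)), ?_⟩
      funext j
      simp only [projp, hwR, Pi.add_apply, Pi.smul_apply, smul_eq_mul]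
      push_cast
      ring
    have hm_span : projp p wR ∈ Submodule.span ℝ ((fun x => x - p) '' (J ∪ K)) := by
      rw [hw_eq, projp_add]
      exact Submodule.add_mem _
        (Submodule.span_mono (Set.image_mono Set.subset_union_left) (projp_mem_span hy))
        (Submodule.span_mono (Set.image_mono Set.subset_union_right) (projp_mem_span hz))
    obtain ⟨⟨q1, q2⟩, ⟨⟨hq1s, hq1l⟩, ⟨hq2s, hq2l⟩, hqsum⟩, -⟩ := hdecomp _ hm_span hm_lam
    have hq1y : q1 = projp p y := by
      have hd1 : q1 - projp p y ∈ Submodule.span ℝ ((fun x => x - p) '' J) :=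
        sub_mem hq1s (projp_mem_span hy)
      have hd2 : q1 - projp p y ∈ Submodule.span ℝ ((fun x => x - p) '' K) := by
        have hswap : q1 - projp p y = projp p z - q2 := by
          have h1 : projp p wR = projp p y + projp p z := by rw [hw_eq, projp_add]
          have h2 : q1 + q2 = projp p y + projp p z := hqsum.symm.trans h1
          rw [sub_eq_sub_iff_add_eq_add]
          rw [h2]; abel
        rw [hswap]
        exact sub_mem (projp_mem_span hz) hq2s
      have h0 := span_inter_eq_zero hpJ hpK hint hd1 hd2
      exact sub_eq_zero.mp h0
    obtain ⟨zJ, cJ, hzJ⟩ := hq1l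
    rw [hq1y] at hzJ
    have hl_nn : 0 ≤ y (Fin.last n) := last_of_cone hy
    obtain ⟨N, hN⟩ := exists_nat_ge ((cJ : ℝ) + y (Fin.last n))
    have hr1 : (1 : ℝ) ≤ r := by exact_mod_cast hr
    have hNr : (cJ : ℝ) + y (Fin.last n) ≤ (N : ℝ) * r := by
      nlinarith [Nat.cast_nonneg (α := ℝ) N]
    set s : ℝ := (N : ℝ) * r - cJ - y (Fin.last n) with hs_def
    have hs : 0 ≤ s := by rw [hs_def]; linarith
    clear_value s
    set y₀ := y + s • emb p with hy₀_def
    have hy₀ : y₀ ∈ cone J := cone_add hJconv hy (smul_emb_mem_cone hpJ hs)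
    have hyj : ∀ j : Fin n,
        y j.castSucc = (zJ j : ℝ) + ((cJ : ℝ) + y (Fin.last n)) * p j := by
      intro j
      have h := congrFun hzJ j
      simp only [projp, Pi.add_apply, Pi.smul_apply, smul_eq_mul] at h
      linear_combination h
    have hy₀lat : IsLat y₀ := by
      intro i
      refine Fin.lastCases ?_ (fun j => ?_) i
      · refine ⟨(N : ℤ) * r - cJ, ?_⟩
        simp only [hy₀_def, Pi.add_apply, Pi.smul_apply, emb_last, smul_eq_mul, mul_one]
        rw [hs_def]
        push_cast
        ring
      · obtain ⟨ζ, hζ⟩ := hrp j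
        refine ⟨zJ j + N * ζ, ?_⟩
        simp only [hy₀_def, Pi.add_apply, Pi.smul_apply, emb_castSucc, smul_eq_mul]
        rw [hyj j, hs_def]
        push_cast
        linear_combination (N : ℝ) * hζ
    have hy₀mem : y₀ ∈ latt (cone J) := ⟨hy₀, hy₀lat⟩
    obtain ⟨hx_cone, hx_max⟩ := epsP_spec hJcpt hy₀ (p := p)
    have hsμ : s ≤ sSup {t : ℝ | y₀ - t • emb p ∈ cone J} := by
      refine le_csSup (bddAbove_S p y₀) ?_
      rw [Set.mem_setOf_eq, hy₀_def]
      simpa using hy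
    have hxK : wR - epsP p J y₀ ∈ cone K := by
      obtain ⟨μ, hμ⟩ : ∃ μ, sSup {t : ℝ | y₀ - t • emb p ∈ cone J} = μ := ⟨_, rfl⟩
      have heps : epsP p J y₀ = y₀ - μ • emb p := by rw [← hμ]; rfl
      have hsμ' : s ≤ μ := hμ ▸ hsμ
      have hrw : wR - epsP p J y₀ = z + (μ - s) • emb p := by
        rw [heps, hy₀_def, hw_eq, sub_smul]
        abel
      rw [hrw]
      exact cone_add hKconv hz (smul_emb_mem_cone hpK (by linarith))
    refine ⟨epsP p J y₀, ⟨⟨y₀, hy₀mem, rfl⟩, hxK⟩, ?_⟩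
    rintro x' ⟨hx'p, hx'K⟩
    exact pllenv_unique hJcpt hpJ hpK hint hx'p ⟨y₀, hy₀mem, rfl⟩ hx'K hxK
  · rintro ⟨x, ⟨hxp, hxK⟩, -⟩
    obtain ⟨y₀, ⟨hy₀c, -⟩, rfl⟩ := hxp
    have hx_cone := (epsP_spec hJcpt hy₀c (p := p)).1
    exact (mem_cone_sum hJconv hKconv hpJ hpK).2
      ⟨epsP p J y₀, hx_cone, wR - epsP p J y₀, hxK, by abel⟩


end ArxivFreeSum
end
end
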